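/- arXiv:1308.2170 — 2 statements merged into one kernel-verified Lean document; each statement's English description precedes it below -/
import Mathlib

section
/- Let e ≥ 2, r = 3, fix a partition {0,…,e−1} = X ⊔ Y ⊔ Z with |Y| = y+1 ≥ 1 and |Z| = z+1 ≥ 1, and fix u ∈ {1,…,6}. Then D^u is a single equivalence class under the bead-swap relation ∼: for every M ∈ D^u one has {L ∈ M(3,e) : L ∼ M} = D^u. -/
open scoped Classical

namespace AK
noncomputable section



/-! ### Matrices, order from base tuple, abacus β-sets -/

/-- The order ≺ on columns determined by a base tuple `B`. -/
def prec {e : ℕ} (B : Fin e → ℕ) (i j : Fin e) : Prop :=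
  B i < B j ∨ (B i = B j ∧ i < j)

/-- `rank B i = π(B)⁻¹(i)`, the number of columns ≺-smaller than `i`. -/
def rank {e : ℕ} (B : Fin e → ℕ) (i : Fin e) : Fin e :=
  ⟨(Finset.univ.filter (fun j => prec B j i)).card, by
    have h1 : (Finset.univ.filter (fun j => prec B j i)) ⊆ Finset.univ.erase i := by
      intro j hj
      rw [Finset.mem_filter] at hj
      refine Finset.mem_erase.mpr ⟨?_, Finset.mem_univ j⟩
      rintro rfl
      rcases hj.2 with h | ⟨-, h⟩ <;> exact lt_irrefl _ h
    have h2 := Finset.card_le_card h1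
    have h3 : (Finset.univ.erase i).card < Finset.univ.card :=
      Finset.card_erase_lt_of_mem (Finset.mem_univ i)
    simpa using lt_of_le_of_lt h2 h3⟩

/-- The number of beads on runner `i` of the abacus of component `s` of `Pt(B,M)`. -/
def beads {e r : ℕ} (B : Fin e → ℕ) (M : Fin r → Fin e → Bool) (s : Fin r) (i : Fin e) : ℕ :=
  B i + (if M s (rank B i) then 1 else 0)

/-- The canonical β-set of component `s` of `Pt(B,M)`. -/
def Tset {e r : ℕ} (B : Fin e → ℕ) (M : Fin r → Fin e → Bool) (s : Fin r) : Set ℤ :=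
  {z | z < 0 ∨ (0 ≤ z ∧ ∃ h : z.toNat % e < e, z.toNat / e < beads B M s ⟨z.toNat % e, h⟩)}

/-- `n_s`, the total number of beads of component `s`. -/
def nsum {e r : ℕ} (B : Fin e → ℕ) (M : Fin r → Fin e → Bool) (s : Fin r) : ℕ :=
  ∑ i : Fin e, beads B M s i

/-- Decreasing enumeration of a set of integers: `tEnum T x` is `t_{x+1}`. -/
noncomputable def tEnum (T : Set ℤ) : ℕ → ℤ
  | 0 => sSup T
  | (x + 1) => sSup (T ∩ Set.Iio (tEnum T x))

/-- The multipartition `Pt(B,M)`: component `s`, part `p+1` (0-indexed parts). -/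
noncomputable def PtPart {e r : ℕ} (B : Fin e → ℕ) (M : Fin r → Fin e → Bool)
    (s : Fin r) (p : ℕ) : ℕ :=
  (tEnum (Tset B M s) p + (p + 1) - (nsum B M s : ℤ)).toNat

/-- The multicharge of `Pt(B,M)`. -/
noncomputable def PtCharge {e r : ℕ} (B : Fin e → ℕ) (M : Fin r → Fin e → Bool)
    (s : Fin r) : ZMod e :=
  (nsum B M s : ZMod e)

/-! ### Nodes, good nodes and Kleshchev multipartitions -/

/-- A node `(s, x, y)` (all 0-indexed). -/
abbrev Node (r : ℕ) := Fin r × ℕ × ℕ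

/-- `A` is above `B`. -/
def NodeAbove {r : ℕ} (A B : Node r) : Prop :=
  A.1 < B.1 ∨ (A.1 = B.1 ∧ A.2.1 < B.2.1)

/-- The residue of a node. -/
def res {e r : ℕ} (a : Fin r → ZMod e) (A : Node r) : ZMod e :=
  a A.1 - (A.2.1 : ZMod e) + (A.2.2 : ZMod e)

/-- `A` is a removable node of `lam`. -/
def Removable {r : ℕ} (lam : Fin r → ℕ → ℕ) (A : Node r) : Prop :=
  A.2.2 + 1 = lam A.1 A.2.1 ∧ lam A.1 (A.2.1 + 1) < lam A.1 A.2.1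

/-- `A` is an addable node of `lam`. -/
def Addable {r : ℕ} (lam : Fin r → ℕ → ℕ) (A : Node r) : Prop :=
  A.2.2 = lam A.1 A.2.1 ∧ (A.2.1 = 0 ∨ lam A.1 A.2.1 < lam A.1 (A.2.1 - 1))

/-- `A` is a normal node of `lam`. -/
def Normal {e r : ℕ} (a : Fin r → ZMod e) (lam : Fin r → ℕ → ℕ) (A : Node r) : Prop :=
  Removable lam A ∧
    ∀ B : Node r, Addable lam B → res a B = res a A → NodeAbove A B →
      Set.ncard {C : Node r | Addable lam C ∧ res a C = res a A ∧ NodeAbove A C ∧ NodeAbove C B}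
        < Set.ncard {C : Node r | Removable lam C ∧ res a C = res a A ∧ NodeAbove A C ∧ NodeAbove C B}

/-- `A` is a good node of `lam`: normal, and highest among normal nodes of its residue. -/
def Good {e r : ℕ} (a : Fin r → ZMod e) (lam : Fin r → ℕ → ℕ) (A : Node r) : Prop :=
  Normal a lam A ∧ ∀ B : Node r, Normal a lam B → res a B = res a A → B ≠ A → NodeAbove A B

/-- Remove the node `A` from `lam`. -/
def removeNode {r : ℕ} (lam : Fin r → ℕ → ℕ) (A : Node r) : Fin r → ℕ → ℕ :=
  fun s x => if s = A.1 ∧ x = A.2.1 then lam s x - 1 else lam s x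

/-- Kleshchev multipartitions (for the multicharge `a`). -/
inductive IsKleshchev {e r : ℕ} (a : Fin r → ZMod e) : (Fin r → ℕ → ℕ) → Prop
  | empty : IsKleshchev a (fun _ _ => 0)
  | step (lam : Fin r → ℕ → ℕ) (A : Node r) (hA : Good a lam A)
      (h : IsKleshchev a (removeNode lam A)) : IsKleshchev a lam

/-! ### Weights and bead swaps -/

/-- `δ₊^M(t,s)`. -/
def deltaP {e r : ℕ} (M : Fin r → Fin e → Bool) (t s : Fin r) : ℕ :=
  (Finset.univ.filter (fun i => M t i = true ∧ M s i = false)).card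

/-- `wt^M(t,s)`. -/
def wtPair {e r : ℕ} (M : Fin r → Fin e → Bool) (t s : Fin r) : ℕ :=
  min (deltaP M t s) (deltaP M s t)

/-- `wt(M)`. -/
def wtM {e r : ℕ} (M : Fin r → Fin e → Bool) : ℕ :=
  ∑ t : Fin r, ∑ s ∈ Finset.univ.filter (· < t), wtPair M t s

/-- `M'` is obtained from `M` by a bead swap. -/
def BeadSwap {e r : ℕ} (M M' : Fin r → Fin e → Bool) : Prop :=
  ∃ i j : Fin e, i ≠ j ∧ ∃ s t : Fin r, s ≠ t ∧
    M s i = true ∧ M t j = true ∧ M s j = false ∧ M t i = false ∧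
    M' s i = false ∧ M' t j = false ∧ M' s j = true ∧ M' t i = true ∧
    (∀ s' i', (s' ≠ s ∧ s' ≠ t) ∨ (i' ≠ i ∧ i' ≠ j) → M' s' i' = M s' i')




/-! ### The families `α^u_k`, `β^u_l`, `γ^u_{kl}` for `r = 3` -/

def xcol : Fin 6 → Fin 3 → Bool := fun _ => ![false, false, false]

def ycol : Fin 6 → Fin 3 → Bool :=
  ![![false,true,true], ![true,false,false], ![true,true,false],
    ![false,false,true], ![false,true,true], ![true,false,false]]

def zcol : Fin 6 → Fin 3 → Bool :=
  ![![false,false,true], ![true,false,true], ![false,true,false],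
    ![true,false,true], ![false,true,false], ![true,true,false]]

def oycol : Fin 6 → Fin 3 → Bool :=
  ![![true,false,true], ![false,false,true], ![false,true,true],
    ![true,false,false], ![true,true,false], ![false,true,false]]

def ozcol : Fin 6 → Fin 3 → Bool :=
  ![![false,true,false], ![true,true,false], ![true,false,false],
    ![false,true,true], ![false,false,true], ![true,false,true]]

def aacol : Fin 6 → Fin 3 → Bool :=
  ![![true,true,false], ![false,true,false], ![true,false,true],
    ![false,true,false], ![true,false,true], ![false,false,true]]

def abcol : Fin 6 → Fin 3 → Bool :=
  ![![true,false,false], ![false,true,true], ![false,false,true],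
    ![true,true,false], ![true,false,false], ![false,true,true]]

variable {e : ℕ}

/-- The matrix `α^u_k`. -/
def alphaM (Y Z : Finset (Fin e)) {y : ℕ} (hY : Y.card = y + 1) (u : Fin 6)
    (k : Fin (y + 1)) : Fin 3 → Fin e → Bool :=
  fun s c =>
    if c = Y.orderEmbOfFin hY k then aacol u s
    else if c ∈ Y then ycol u s
    else if c ∈ Z then zcol u s
    else false

/-- The matrix `β^u_l`. -/
def betaM (Y Z : Finset (Fin e)) {z : ℕ} (hZ : Z.card = z + 1) (u : Fin 6)
    (l : Fin (z + 1)) : Fin 3 → Fin e → Bool :=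
  fun s c =>
    if c = Z.orderEmbOfFin hZ l then abcol u s
    else if c ∈ Z then zcol u s
    else if c ∈ Y then ycol u s
    else false

/-- The matrix `γ^u_{kl}`. -/
def gammaM (Y Z : Finset (Fin e)) {y z : ℕ} (hY : Y.card = y + 1) (hZ : Z.card = z + 1)
    (u : Fin 6) (k : Fin (y + 1)) (l : Fin (z + 1)) : Fin 3 → Fin e → Bool :=
  fun s c =>
    if c = Y.orderEmbOfFin hY k then oycol u s
    else if c = Z.orderEmbOfFin hZ l then ozcol u s
    else if c ∈ Y then ycol u s
    else if c ∈ Z then zcol u s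
    else false

/-- The set `D^u` of matrices in the block. -/
def Duset (Y Z : Finset (Fin e)) {y z : ℕ} (hY : Y.card = y + 1) (hZ : Z.card = z + 1)
    (u : Fin 6) : Set (Fin 3 → Fin e → Bool) :=
  {A | (∃ k, A = alphaM Y Z hY u k) ∨ (∃ l, A = betaM Y Z hZ u l) ∨
       (∃ k l, A = gammaM Y Z hY hZ u k l)}



/-! ### Auxiliary development for Statement 2 -/

def bn (b : Bool) : ℕ := if b then 1 else 0

def wtv (v : Fin 3 → Bool) : ℕ := ∑ s, bn (v s)

def colsum (L : Fin 3 → Fin e → Bool) (c : Fin e) : ℕ := wtv (fun s => L s c)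

def rowsum (L : Fin 3 → Fin e → Bool) (s : Fin 3) : ℕ := ∑ c, bn (L s c)

def Rrow (u : Fin 6) (y z : ℕ) (s : Fin 3) : ℕ :=
  y * bn (ycol u s) + (z + 1) * bn (zcol u s) + bn (aacol u s)

def colspec (Y Z : Finset (Fin e)) (u : Fin 6) (c : Fin e) : ℕ :=
  if c ∈ Y then wtv (ycol u) else if c ∈ Z then wtv (zcol u) else 0

def Spec (Y Z : Finset (Fin e)) (y z : ℕ) (u : Fin 6) (L : Fin 3 → Fin e → Bool) : Prop :=
  (∀ s, rowsum L s = Rrow u y z s) ∧ ∀ c, colsum L c = colspec Y Z u c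

/- decidable facts about the column vectors -/

lemma factY : ∀ (u : Fin 6) (v : Fin 3 → Bool), wtv v = wtv (ycol u) →
    v = ycol u ∨ v = oycol u ∨ v = aacol u := by decide

lemma factZ : ∀ (u : Fin 6) (v : Fin 3 → Bool), wtv v = wtv (zcol u) →
    v = zcol u ∨ v = ozcol u ∨ v = abcol u := by decide

lemma fact0 : ∀ (v : Fin 3 → Bool), wtv v = 0 → ∀ s, v s = false := by decide

lemma factW : ∀ u : Fin 6, wtv (oycol u) = wtv (ycol u) ∧ wtv (aacol u) = wtv (ycol u) ∧
    wtv (ozcol u) = wtv (zcol u) ∧ wtv (abcol u) = wtv (zcol u) := by decide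

lemma factD : ∀ u : Fin 6, ycol u ≠ oycol u ∧ ycol u ≠ aacol u ∧ oycol u ≠ aacol u ∧
    zcol u ≠ ozcol u ∧ zcol u ≠ abcol u ∧ ozcol u ≠ abcol u := by decide

lemma factI1 : ∀ (u : Fin 6) (s : Fin 3),
    bn (abcol u s) + bn (ycol u s) = bn (aacol u s) + bn (zcol u s) := by decide

lemma factI2 : ∀ (u : Fin 6) (s : Fin 3),
    bn (oycol u s) + bn (ozcol u s) = bn (aacol u s) + bn (zcol u s) := by decide

/- bead swaps preserve row and column sums -/

lemma sum_swap_two {n : ℕ} (i j : Fin n) (hij : i ≠ j) (f g : Fin n → ℕ)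
    (hf : f i + f j = g i + g j) (h : ∀ c, c ≠ i → c ≠ j → f c = g c) :
    ∑ c, f c = ∑ c, g c := by
  have hj : j ∈ Finset.univ.erase i := Finset.mem_erase.2 ⟨Ne.symm hij, Finset.mem_univ j⟩
  have e1 : ∀ F : Fin n → ℕ, ∑ c, F c = F i + (F j + ∑ c ∈ (Finset.univ.erase i).erase j, F c) := by
    intro F
    rw [← Finset.add_sum_erase _ F (Finset.mem_univ i), ← Finset.add_sum_erase _ F hj]
  rw [e1 f, e1 g, ← add_assoc, ← add_assoc, hf]
  congr 1
  apply Finset.sum_congr rfl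
  intro c hc
  rw [Finset.mem_erase, Finset.mem_erase] at hc
  exact h c hc.2.1 hc.1

lemma beadswap_rowsum {M M' : Fin 3 → Fin e → Bool} (h : BeadSwap M M') (s' : Fin 3) :
    rowsum M' s' = rowsum M s' := by
  obtain ⟨i, j, hij, s, t, hst, h1, h2, h3, h4, h5, h6, h7, h8, hoff⟩ := h
  apply sum_swap_two i j hij
  · by_cases hs : s' = s
    · subst hs; rw [h1, h3, h5, h7]; simp [bn]
    by_cases ht : s' = t
    · subst ht; rw [h2, h4, h6, h8]; simp [bn]
    · rw [hoff s' i (Or.inl ⟨hs, ht⟩), hoff s' j (Or.inl ⟨hs, ht⟩)]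
  · intro c hci hcj
    rw [hoff s' c (Or.inr ⟨hci, hcj⟩)]

lemma beadswap_colsum {M M' : Fin 3 → Fin e → Bool} (h : BeadSwap M M') (c : Fin e) :
    colsum M' c = colsum M c := by
  obtain ⟨i, j, hij, s, t, hst, h1, h2, h3, h4, h5, h6, h7, h8, hoff⟩ := h
  unfold colsum wtv
  apply sum_swap_two s t hst
  · by_cases hc : c = i
    · subst hc; simp only [h1, h4, h5, h8]; simp [bn]
    by_cases hc' : c = j
    · subst hc'; simp only [h2, h3, h6, h7]; simp [bn]
    · simp only [hoff s c (Or.inr ⟨hc, hc'⟩), hoff t c (Or.inr ⟨hc, hc'⟩)]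
  · intro s' hs ht
    simp only [hoff s' c (Or.inl ⟨hs, ht⟩)]

lemma eqvgen_margins {L M : Fin 3 → Fin e → Bool} (h : Relation.EqvGen BeadSwap L M) :
    (∀ s, rowsum L s = rowsum M s) ∧ (∀ c, colsum L c = colsum M c) := by
  induction h with
  | rel a b hab =>
      exact ⟨fun s => (beadswap_rowsum hab s).symm, fun c => (beadswap_colsum hab c).symm⟩
  | refl a => exact ⟨fun _ => rfl, fun _ => rfl⟩
  | symm a b _ ih => exact ⟨fun s => (ih.1 s).symm, fun c => (ih.2 c).symm⟩
  | trans a b c _ _ ih1 ih2 =>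
      exact ⟨fun s => (ih1.1 s).trans (ih2.1 s), fun c => (ih1.2 c).trans (ih2.2 c)⟩

/- sum helpers -/

lemma sum_const_on {S : Finset (Fin e)} (f : Fin e → ℕ) (b : ℕ)
    (hfo : ∀ c ∈ S, f c = b) : ∑ c ∈ S, f c = S.card * b := by
  rw [Finset.sum_congr rfl hfo, Finset.sum_const, smul_eq_mul]

lemma sum_const_special {S : Finset (Fin e)} {w : Fin e} (hw : w ∈ S) (f : Fin e → ℕ)
    (a b : ℕ) (hfw : f w = a) (hfo : ∀ c ∈ S, c ≠ w → f c = b) :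
    ∑ c ∈ S, f c = a + (S.card - 1) * b := by
  rw [← Finset.add_sum_erase _ f hw, hfw]
  congr 1
  rw [sum_const_on f b (fun c hc => hfo c (Finset.mem_of_mem_erase hc) (Finset.ne_of_mem_erase hc)),
    Finset.card_erase_of_mem hw]

lemma rowsum_split {Y Z : Finset (Fin e)} (hYZ : Disjoint Y Z) (L : Fin 3 → Fin e → Bool)
    (s : Fin 3) (h0 : ∀ c, c ∉ Y → c ∉ Z → L s c = false) :
    rowsum L s = ∑ c ∈ Y, bn (L s c) + ∑ c ∈ Z, bn (L s c) := by
  unfold rowsum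
  rw [← Finset.sum_filter_add_sum_filter_not Finset.univ (fun c => c ∈ Y ∪ Z)]
  have h1 : Finset.univ.filter (fun c => c ∈ Y ∪ Z) = Y ∪ Z := by
    ext c; simp
  have h2 : ∑ c ∈ Finset.univ.filter (fun c => ¬ c ∈ Y ∪ Z), bn (L s c) = 0 := by
    apply Finset.sum_eq_zero
    intro c hc
    rw [Finset.mem_filter, Finset.mem_union] at hc
    push_neg at hc
    rw [h0 c hc.2.1 hc.2.2]
    rfl
  rw [h1, h2, Finset.sum_union hYZ, add_zero]

/- the counting lemma -/

lemma count_solve (u : Fin 6) (y z a b c d : ℕ) (hab : a + b ≤ y + 1) (hcd : c + d ≤ z + 1)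
    (h : ∀ s, (a * bn (oycol u s) + b * bn (aacol u s) + (y + 1 - a - b) * bn (ycol u s))
      + (c * bn (ozcol u s) + d * bn (abcol u s) + (z + 1 - c - d) * bn (zcol u s))
      = Rrow u y z s) :
    (a = 0 ∧ b = 1 ∧ c = 0 ∧ d = 0) ∨ (a = 0 ∧ b = 0 ∧ c = 0 ∧ d = 1) ∨
    (a = 1 ∧ b = 0 ∧ c = 1 ∧ d = 0) := by
  have h0 := h 0
  have h1 := h 1
  have h2 := h 2
  fin_cases u <;>
    · simp only [ycol, zcol, oycol, ozcol, aacol, abcol, Rrow, bn] at h0 h1 h2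
      norm_num [Matrix.cons_val_zero, Matrix.cons_val_one, Matrix.head_cons,
        Matrix.cons_val_succ] at h0 h1 h2
      omega

/- Step A : members of `D^u` satisfy the margin spec -/

lemma duset_spec {Y Z : Finset (Fin e)} {y z : ℕ} (hY : Y.card = y + 1) (hZ : Z.card = z + 1)
    (hYZ : Disjoint Y Z) (u : Fin 6) {M : Fin 3 → Fin e → Bool}
    (hM : M ∈ Duset Y Z hY hZ u) : Spec Y Z y z u M := by
  have hdis : ∀ c ∈ Z, c ∉ Y := fun c hc hc' => (Finset.disjoint_left.mp hYZ hc' hc).elim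
  obtain ⟨k, rfl⟩ | ⟨l, rfl⟩ | ⟨k, l, rfl⟩ := hM
  · -- alpha
    have hik : Y.orderEmbOfFin hY k ∈ Y := Finset.orderEmbOfFin_mem Y hY k
    have h0 : ∀ s c, c ∉ Y → c ∉ Z → alphaM Y Z hY u k s c = false := by
      intro s c h1 h2
      have : c ≠ Y.orderEmbOfFin hY k := fun h => h1 (h ▸ hik)
      simp [alphaM, this, h1, h2]
    constructor
    · intro s
      rw [rowsum_split hYZ _ s (h0 s)]
      have e1 : ∑ c ∈ Y, bn (alphaM Y Z hY u k s c) =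
          bn (aacol u s) + (Y.card - 1) * bn (ycol u s) := by
        apply sum_const_special hik
        · simp [alphaM]
        · intro c hc hne
          have : c ∉ Z := fun h => hdis c h hc
          simp [alphaM, hne, hc]
      have e2 : ∑ c ∈ Z, bn (alphaM Y Z hY u k s c) = Z.card * bn (zcol u s) := by
        apply sum_const_on
        intro c hc
        have h1 : c ∉ Y := hdis c hc
        have h2 : c ≠ Y.orderEmbOfFin hY k := fun h => h1 (h ▸ hik)
        simp [alphaM, h1, h2, hc]
      rw [e1, e2, hY, hZ, Rrow]
      simp only [Nat.add_sub_cancel]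
      ring
    · intro c
      unfold colsum colspec
      by_cases h1 : c = Y.orderEmbOfFin hY k
      · have : (fun s => alphaM Y Z hY u k s c) = aacol u := by
          funext s; simp [alphaM, h1]
        rw [this, if_pos (h1 ▸ hik), (factW u).2.1]
      by_cases h2 : c ∈ Y
      · have : (fun s => alphaM Y Z hY u k s c) = ycol u := by
          funext s; simp [alphaM, h1, h2]
        rw [this, if_pos h2]
      by_cases h3 : c ∈ Z
      · have : (fun s => alphaM Y Z hY u k s c) = zcol u := by
          funext s; simp [alphaM, h1, h2, h3]
        rw [this, if_neg h2, if_pos h3]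
      · have : (fun s => alphaM Y Z hY u k s c) = (fun _ => false) := by
          funext s; simp [alphaM, h1, h2, h3]
        rw [this, if_neg h2, if_neg h3]
        simp [wtv, bn]
  · -- beta
    have hjl : Z.orderEmbOfFin hZ l ∈ Z := Finset.orderEmbOfFin_mem Z hZ l
    have h0 : ∀ s c, c ∉ Y → c ∉ Z → betaM Y Z hZ u l s c = false := by
      intro s c h1 h2
      have : c ≠ Z.orderEmbOfFin hZ l := fun h => h2 (h ▸ hjl)
      simp [betaM, this, h1, h2]
    constructor
    · intro s
      rw [rowsum_split hYZ _ s (h0 s)]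
      have e1 : ∑ c ∈ Y, bn (betaM Y Z hZ u l s c) = Y.card * bn (ycol u s) := by
        apply sum_const_on
        intro c hc
        have h1 : c ∉ Z := fun h => hdis c h hc
        have h2 : c ≠ Z.orderEmbOfFin hZ l := fun h => h1 (h ▸ hjl)
        simp [betaM, h1, h2, hc]
      have e2 : ∑ c ∈ Z, bn (betaM Y Z hZ u l s c) =
          bn (abcol u s) + (Z.card - 1) * bn (zcol u s) := by
        apply sum_const_special hjl
        · simp [betaM]
        · intro c hc hne
          simp [betaM, hne, hc]
      rw [e1, e2, hY, hZ, Rrow]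
      simp only [Nat.add_sub_cancel]
      have := factI1 u s
      cases h1 : ycol u s <;> cases h2 : zcol u s <;> cases h3 : aacol u s <;>
        cases h4 : abcol u s <;>
        simp_all [bn] <;> omega
    · intro c
      unfold colsum colspec
      by_cases h1 : c = Z.orderEmbOfFin hZ l
      · have : (fun s => betaM Y Z hZ u l s c) = abcol u := by
          funext s; simp [betaM, h1]
        have hcz : c ∈ Z := h1 ▸ hjl
        rw [this, if_neg (hdis c hcz), if_pos hcz, (factW u).2.2.2]
      by_cases h2 : c ∈ Z
      · have : (fun s => betaM Y Z hZ u l s c) = zcol u := by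
          funext s; simp [betaM, h1, h2]
        rw [this, if_neg (hdis c h2), if_pos h2]
      by_cases h3 : c ∈ Y
      · have : (fun s => betaM Y Z hZ u l s c) = ycol u := by
          funext s; simp [betaM, h1, h2, h3]
        rw [this, if_pos h3]
      · have : (fun s => betaM Y Z hZ u l s c) = (fun _ => false) := by
          funext s; simp [betaM, h1, h2, h3]
        rw [this, if_neg h3, if_neg h2]
        simp [wtv, bn]
  · -- gamma
    have hik : Y.orderEmbOfFin hY k ∈ Y := Finset.orderEmbOfFin_mem Y hY k
    have hjl : Z.orderEmbOfFin hZ l ∈ Z := Finset.orderEmbOfFin_mem Z hZ l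
    have hkl : Y.orderEmbOfFin hY k ≠ Z.orderEmbOfFin hZ l :=
      fun h => (hdis _ hjl) (h ▸ hik)
    have h0 : ∀ s c, c ∉ Y → c ∉ Z → gammaM Y Z hY hZ u k l s c = false := by
      intro s c h1 h2
      have e1 : c ≠ Y.orderEmbOfFin hY k := fun h => h1 (h ▸ hik)
      have e2 : c ≠ Z.orderEmbOfFin hZ l := fun h => h2 (h ▸ hjl)
      simp [gammaM, e1, e2, h1, h2]
    constructor
    · intro s
      rw [rowsum_split hYZ _ s (h0 s)]
      have e1 : ∑ c ∈ Y, bn (gammaM Y Z hY hZ u k l s c) =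
          bn (oycol u s) + (Y.card - 1) * bn (ycol u s) := by
        apply sum_const_special hik
        · simp [gammaM]
        · intro c hc hne
          have w1 : c ≠ Z.orderEmbOfFin hZ l := fun h => (hdis c (h ▸ hjl)) hc
          simp [gammaM, hne, w1, hc]
      have e2 : ∑ c ∈ Z, bn (gammaM Y Z hY hZ u k l s c) =
          bn (ozcol u s) + (Z.card - 1) * bn (zcol u s) := by
        apply sum_const_special hjl
        · simp [gammaM, hkl.symm]
        · intro c hc hne
          have w1 : c ≠ Y.orderEmbOfFin hY k := fun h => (hdis c hc) (h ▸ hik)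
          have w2 : c ∉ Y := hdis c hc
          simp [gammaM, hne, w1, w2, hc]
      rw [e1, e2, hY, hZ, Rrow]
      simp only [Nat.add_sub_cancel]
      have := factI2 u s
      cases h1 : ycol u s <;> cases h2 : zcol u s <;> cases h3 : aacol u s <;>
        cases h4 : oycol u s <;> cases h5 : ozcol u s <;>
        simp_all [bn] <;> omega
    · intro c
      unfold colsum colspec
      by_cases h1 : c = Y.orderEmbOfFin hY k
      · have : (fun s => gammaM Y Z hY hZ u k l s c) = oycol u := by
          funext s; simp [gammaM, h1]
        rw [this, if_pos (h1 ▸ hik), (factW u).1]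
      by_cases h2 : c = Z.orderEmbOfFin hZ l
      · have : (fun s => gammaM Y Z hY hZ u k l s c) = ozcol u := by
          funext s; simp [gammaM, h1, h2, hkl.symm]
        have hcz : c ∈ Z := h2 ▸ hjl
        rw [this, if_neg (hdis c hcz), if_pos hcz, (factW u).2.2.1]
      by_cases h3 : c ∈ Y
      · have : (fun s => gammaM Y Z hY hZ u k l s c) = ycol u := by
          funext s; simp [gammaM, h1, h2, h3]
        rw [this, if_pos h3]
      by_cases h4 : c ∈ Z
      · have : (fun s => gammaM Y Z hY hZ u k l s c) = zcol u := by
          funext s; simp [gammaM, h1, h2, h3, h4]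
        rw [this, if_neg h3, if_pos h4]
      · have : (fun s => gammaM Y Z hY hZ u k l s c) = (fun _ => false) := by
          funext s; simp [gammaM, h1, h2, h3, h4]
        rw [this, if_neg h3, if_neg h4]
        simp [wtv, bn]



/- Step C : the margin spec characterises `D^u` -/

lemma exists_orderEmb_eq {S : Finset (Fin e)} {n : ℕ} (hS : S.card = n) {w : Fin e}
    (hw : w ∈ S) : ∃ k : Fin n, S.orderEmbOfFin hS k = w := by
  have h := Finset.range_orderEmbOfFin S hS
  have : w ∈ Set.range (S.orderEmbOfFin hS) := by rw [h]; exact hw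
  exact this

lemma spec_duset {Y Z : Finset (Fin e)} {y z : ℕ} (hY : Y.card = y + 1) (hZ : Z.card = z + 1)
    (hYZ : Disjoint Y Z) (u : Fin 6) {L : Fin 3 → Fin e → Bool}
    (hL : Spec Y Z y z u L) : L ∈ Duset Y Z hY hZ u := by
  classical
  have hdis : ∀ c ∈ Z, c ∉ Y := fun c hc hc' => (Finset.disjoint_left.mp hYZ hc' hc).elim
  have hzero : ∀ c, c ∉ Y → c ∉ Z → ∀ s, L s c = false := by
    intro c h1 h2 s
    have h := hL.2 c
    rw [colspec, if_neg h1, if_neg h2] at h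
    exact fact0 _ h s
  have hYcol : ∀ c ∈ Y, (fun s => L s c) = ycol u ∨ (fun s => L s c) = oycol u ∨
      (fun s => L s c) = aacol u := by
    intro c hc
    apply factY
    have h := hL.2 c
    rw [colspec, if_pos hc] at h
    exact h
  have hZcol : ∀ c ∈ Z, (fun s => L s c) = zcol u ∨ (fun s => L s c) = ozcol u ∨
      (fun s => L s c) = abcol u := by
    intro c hc
    apply factZ
    have h := hL.2 c
    rw [colspec, if_neg (hdis c hc), if_pos hc] at h
    exact h
  set A := Y.filter (fun c => (fun s => L s c) = oycol u) with hAdef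
  set B := Y.filter (fun c => (fun s => L s c) = aacol u) with hBdef
  set C := Z.filter (fun c => (fun s => L s c) = ozcol u) with hCdef
  set D := Z.filter (fun c => (fun s => L s c) = abcol u) with hDdef
  have hAB : Disjoint A B := by
    rw [Finset.disjoint_left]
    intro c hcA hcB
    rw [hAdef, Finset.mem_filter] at hcA
    rw [hBdef, Finset.mem_filter] at hcB
    exact (factD u).2.2.1 (hcA.2.symm.trans hcB.2)
  have hCD : Disjoint C D := by
    rw [Finset.disjoint_left]
    intro c hcC hcD
    rw [hCdef, Finset.mem_filter] at hcC
    rw [hDdef, Finset.mem_filter] at hcD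
    exact (factD u).2.2.2.2.2 (hcC.2.symm.trans hcD.2)
  have hABY : A ∪ B ⊆ Y := by
    intro c hc
    rcases Finset.mem_union.mp hc with h | h
    · exact Finset.mem_of_mem_filter c h
    · exact Finset.mem_of_mem_filter c h
  have hCDZ : C ∪ D ⊆ Z := by
    intro c hc
    rcases Finset.mem_union.mp hc with h | h
    · exact Finset.mem_of_mem_filter c h
    · exact Finset.mem_of_mem_filter c h
  have hab : A.card + B.card ≤ y + 1 := by
    rw [← Finset.card_union_of_disjoint hAB, ← hY]
    exact Finset.card_le_card hABY
  have hcd : C.card + D.card ≤ z + 1 := by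
    rw [← Finset.card_union_of_disjoint hCD, ← hZ]
    exact Finset.card_le_card hCDZ
  have hYsum : ∀ s, ∑ c ∈ Y, bn (L s c) =
      A.card * bn (oycol u s) + B.card * bn (aacol u s)
        + (y + 1 - A.card - B.card) * bn (ycol u s) := by
    intro s
    rw [← Finset.sum_sdiff hABY, Finset.sum_union hAB]
    have e1 : ∑ c ∈ A, bn (L s c) = A.card * bn (oycol u s) := by
      apply sum_const_on
      intro c hc
      rw [hAdef, Finset.mem_filter] at hc
      rw [show L s c = oycol u s from congrFun hc.2 s]
    have e2 : ∑ c ∈ B, bn (L s c) = B.card * bn (aacol u s) := by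
      apply sum_const_on
      intro c hc
      rw [hBdef, Finset.mem_filter] at hc
      rw [show L s c = aacol u s from congrFun hc.2 s]
    have e3 : ∑ c ∈ Y \ (A ∪ B), bn (L s c) =
        (y + 1 - A.card - B.card) * bn (ycol u s) := by
      have hcard : (Y \ (A ∪ B)).card = y + 1 - A.card - B.card := by
        rw [Finset.card_sdiff_of_subset hABY, Finset.card_union_of_disjoint hAB, hY]
        omega
      rw [← hcard]
      apply sum_const_on
      intro c hc
      rw [Finset.mem_sdiff, Finset.mem_union] at hc
      have hcy := hc.1
      have hcA : ¬ (fun s => L s c) = oycol u := by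
        intro h; exact hc.2 (Or.inl (by rw [hAdef, Finset.mem_filter]; exact ⟨hcy, h⟩))
      have hcB : ¬ (fun s => L s c) = aacol u := by
        intro h; exact hc.2 (Or.inr (by rw [hBdef, Finset.mem_filter]; exact ⟨hcy, h⟩))
      rcases hYcol c hcy with h | h | h
      · rw [show L s c = ycol u s from congrFun h s]
      · exact absurd h hcA
      · exact absurd h hcB
    rw [e1, e2, e3]
    ring
  have hZsum : ∀ s, ∑ c ∈ Z, bn (L s c) =
      C.card * bn (ozcol u s) + D.card * bn (abcol u s)
        + (z + 1 - C.card - D.card) * bn (zcol u s) := by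
    intro s
    rw [← Finset.sum_sdiff hCDZ, Finset.sum_union hCD]
    have e1 : ∑ c ∈ C, bn (L s c) = C.card * bn (ozcol u s) := by
      apply sum_const_on
      intro c hc
      rw [hCdef, Finset.mem_filter] at hc
      rw [show L s c = ozcol u s from congrFun hc.2 s]
    have e2 : ∑ c ∈ D, bn (L s c) = D.card * bn (abcol u s) := by
      apply sum_const_on
      intro c hc
      rw [hDdef, Finset.mem_filter] at hc
      rw [show L s c = abcol u s from congrFun hc.2 s]
    have e3 : ∑ c ∈ Z \ (C ∪ D), bn (L s c) =
        (z + 1 - C.card - D.card) * bn (zcol u s) := by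
      have hcard : (Z \ (C ∪ D)).card = z + 1 - C.card - D.card := by
        rw [Finset.card_sdiff_of_subset hCDZ, Finset.card_union_of_disjoint hCD, hZ]
        omega
      rw [← hcard]
      apply sum_const_on
      intro c hc
      rw [Finset.mem_sdiff, Finset.mem_union] at hc
      have hcz := hc.1
      have hcC : ¬ (fun s => L s c) = ozcol u := by
        intro h; exact hc.2 (Or.inl (by rw [hCdef, Finset.mem_filter]; exact ⟨hcz, h⟩))
      have hcD : ¬ (fun s => L s c) = abcol u := by
        intro h; exact hc.2 (Or.inr (by rw [hDdef, Finset.mem_filter]; exact ⟨hcz, h⟩))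
      rcases hZcol c hcz with h | h | h
      · rw [show L s c = zcol u s from congrFun h s]
      · exact absurd h hcC
      · exact absurd h hcD
    rw [e1, e2, e3]
    ring
  have key := count_solve u y z A.card B.card C.card D.card hab hcd (by
    intro s
    rw [← hYsum s, ← hZsum s, ← rowsum_split hYZ L s (fun c h1 h2 => hzero c h1 h2 s)]
    exact hL.1 s)
  -- helper facts for reconstruction
  have colA : ∀ {w : Fin e}, A = {w} → (fun s => L s w) = oycol u := by
    intro w hw
    have : w ∈ A := by rw [hw]; exact Finset.mem_singleton_self w
    rw [hAdef, Finset.mem_filter] at this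
    exact this.2
  have colB : ∀ {w : Fin e}, B = {w} → (fun s => L s w) = aacol u := by
    intro w hw
    have : w ∈ B := by rw [hw]; exact Finset.mem_singleton_self w
    rw [hBdef, Finset.mem_filter] at this
    exact this.2
  have colC : ∀ {w : Fin e}, C = {w} → (fun s => L s w) = ozcol u := by
    intro w hw
    have : w ∈ C := by rw [hw]; exact Finset.mem_singleton_self w
    rw [hCdef, Finset.mem_filter] at this
    exact this.2
  have colD : ∀ {w : Fin e}, D = {w} → (fun s => L s w) = abcol u := by
    intro w hw
    have : w ∈ D := by rw [hw]; exact Finset.mem_singleton_self w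
    rw [hDdef, Finset.mem_filter] at this
    exact this.2
  have colYgen : ∀ c ∈ Y, c ∉ A → c ∉ B → (fun s => L s c) = ycol u := by
    intro c hc hcA hcB
    rcases hYcol c hc with h | h | h
    · exact h
    · exact absurd (by rw [hAdef, Finset.mem_filter]; exact ⟨hc, h⟩) hcA
    · exact absurd (by rw [hBdef, Finset.mem_filter]; exact ⟨hc, h⟩) hcB
  have colZgen : ∀ c ∈ Z, c ∉ C → c ∉ D → (fun s => L s c) = zcol u := by
    intro c hc hcC hcD
    rcases hZcol c hc with h | h | h
    · exact h
    · exact absurd (by rw [hCdef, Finset.mem_filter]; exact ⟨hc, h⟩) hcC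
    · exact absurd (by rw [hDdef, Finset.mem_filter]; exact ⟨hc, h⟩) hcD
  rcases key with ⟨ha, hb, hc, hd⟩ | ⟨ha, hb, hc, hd⟩ | ⟨ha, hb, hc, hd⟩
  · -- alpha case : B = {w}
    obtain ⟨w, hw⟩ := Finset.card_eq_one.mp hb
    have hAe : A = ∅ := Finset.card_eq_zero.mp ha
    have hCe : C = ∅ := Finset.card_eq_zero.mp hc
    have hDe : D = ∅ := Finset.card_eq_zero.mp hd
    have hwY : w ∈ Y := hABY (Finset.mem_union.mpr (Or.inr (by
      rw [hw]; exact Finset.mem_singleton_self w)))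
    obtain ⟨k, hk⟩ := exists_orderEmb_eq hY hwY
    refine Or.inl ⟨k, ?_⟩
    funext s c
    rw [alphaM]
    by_cases h1 : c = Y.orderEmbOfFin hY k
    · rw [if_pos h1]
      have : c = w := by rw [h1, hk]
      subst this
      exact congrFun (colB hw) s
    rw [if_neg h1]
    by_cases h2 : c ∈ Y
    · rw [if_pos h2]
      have hcB : c ∉ B := by
        rw [hw, Finset.mem_singleton]
        intro h; exact h1 (by rw [h, hk])
      exact congrFun (colYgen c h2 (by rw [hAe]; exact Finset.notMem_empty c) hcB) s
    rw [if_neg h2]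
    by_cases h3 : c ∈ Z
    · rw [if_pos h3]
      exact congrFun (colZgen c h3 (by rw [hCe]; exact Finset.notMem_empty c)
        (by rw [hDe]; exact Finset.notMem_empty c)) s
    · rw [if_neg h3]
      exact hzero c h2 h3 s
  · -- beta case : D = {w}
    obtain ⟨w, hw⟩ := Finset.card_eq_one.mp hd
    have hAe : A = ∅ := Finset.card_eq_zero.mp ha
    have hBe : B = ∅ := Finset.card_eq_zero.mp hb
    have hCe : C = ∅ := Finset.card_eq_zero.mp hc
    have hwZ : w ∈ Z := hCDZ (Finset.mem_union.mpr (Or.inr (by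
      rw [hw]; exact Finset.mem_singleton_self w)))
    obtain ⟨l, hl⟩ := exists_orderEmb_eq hZ hwZ
    refine Or.inr (Or.inl ⟨l, ?_⟩)
    funext s c
    rw [betaM]
    by_cases h1 : c = Z.orderEmbOfFin hZ l
    · rw [if_pos h1]
      have : c = w := by rw [h1, hl]
      subst this
      exact congrFun (colD hw) s
    rw [if_neg h1]
    by_cases h2 : c ∈ Z
    · rw [if_pos h2]
      have hcD : c ∉ D := by
        rw [hw, Finset.mem_singleton]
        intro h; exact h1 (by rw [h, hl])
      exact congrFun (colZgen c h2 (by rw [hCe]; exact Finset.notMem_empty c) hcD) s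
    rw [if_neg h2]
    by_cases h3 : c ∈ Y
    · rw [if_pos h3]
      exact congrFun (colYgen c h3 (by rw [hAe]; exact Finset.notMem_empty c)
        (by rw [hBe]; exact Finset.notMem_empty c)) s
    · rw [if_neg h3]
      exact hzero c h3 h2 s
  · -- gamma case : A = {w}, C = {w'}
    obtain ⟨w, hw⟩ := Finset.card_eq_one.mp ha
    obtain ⟨w', hw'⟩ := Finset.card_eq_one.mp hc
    have hBe : B = ∅ := Finset.card_eq_zero.mp hb
    have hDe : D = ∅ := Finset.card_eq_zero.mp hd
    have hwY : w ∈ Y := hABY (Finset.mem_union.mpr (Or.inl (by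
      rw [hw]; exact Finset.mem_singleton_self w)))
    have hwZ : w' ∈ Z := hCDZ (Finset.mem_union.mpr (Or.inl (by
      rw [hw']; exact Finset.mem_singleton_self w')))
    obtain ⟨k, hk⟩ := exists_orderEmb_eq hY hwY
    obtain ⟨l, hl⟩ := exists_orderEmb_eq hZ hwZ
    refine Or.inr (Or.inr ⟨k, l, ?_⟩)
    funext s c
    rw [gammaM]
    by_cases h1 : c = Y.orderEmbOfFin hY k
    · rw [if_pos h1]
      have : c = w := by rw [h1, hk]
      subst this
      exact congrFun (colA hw) s
    rw [if_neg h1]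
    by_cases h2 : c = Z.orderEmbOfFin hZ l
    · rw [if_pos h2]
      have : c = w' := by rw [h2, hl]
      subst this
      exact congrFun (colC hw') s
    rw [if_neg h2]
    by_cases h3 : c ∈ Y
    · rw [if_pos h3]
      have hcA : c ∉ A := by
        rw [hw, Finset.mem_singleton]
        intro h; exact h1 (by rw [h, hk])
      exact congrFun (colYgen c h3 hcA (by rw [hBe]; exact Finset.notMem_empty c)) s
    rw [if_neg h3]
    by_cases h4 : c ∈ Z
    · rw [if_pos h4]
      have hcC : c ∉ C := by
        rw [hw', Finset.mem_singleton]
        intro h; exact h2 (by rw [h, hl])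
      exact congrFun (colZgen c h4 hcC (by rw [hDe]; exact Finset.notMem_empty c)) s
    · rw [if_neg h4]
      exact hzero c h3 h4 s



/- Step D : connectivity -/

/-- Data of a bead swap at the level of a pair of column vectors:
column `i` changes from `v` to `v'` and column `j` from `w` to `w'`. -/
def SwapRows (v v' w w' : Fin 3 → Bool) (s t : Fin 3) : Prop :=
  s ≠ t ∧ v s = true ∧ v' s = false ∧ v' t = true ∧ v t = false ∧
    w' s = true ∧ w s = false ∧ w t = true ∧ w' t = false ∧
    ∀ s', s' ≠ s → s' ≠ t → v s' = v' s' ∧ w s' = w' s'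

instance SwapRows.dec (v v' w w' : Fin 3 → Bool) (s t : Fin 3) :
    Decidable (SwapRows v v' w w' s t) := by
  unfold SwapRows
  exact instDecidableAnd

lemma swapAG : ∀ u : Fin 6, ∃ s t, SwapRows (aacol u) (oycol u) (zcol u) (ozcol u) s t := by
  decide

lemma swapBG : ∀ u : Fin 6, ∃ s t, SwapRows (ycol u) (oycol u) (abcol u) (ozcol u) s t := by
  decide

lemma swapGGY : ∀ u : Fin 6, ∃ s t, SwapRows (oycol u) (ycol u) (ycol u) (oycol u) s t := by
  decide

lemma swapGGZ : ∀ u : Fin 6, ∃ s t, SwapRows (ozcol u) (zcol u) (zcol u) (ozcol u) s t := by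
  decide

lemma beadSwap_of_cols {M M' : Fin 3 → Fin e → Bool} {i j : Fin e} (hij : i ≠ j)
    {v v' w w' : Fin 3 → Bool} {s t : Fin 3} (hsw : SwapRows v v' w w' s t)
    (hMi : ∀ s', M s' i = v s') (hMj : ∀ s', M s' j = w s')
    (hM'i : ∀ s', M' s' i = v' s') (hM'j : ∀ s', M' s' j = w' s')
    (hoff : ∀ s' c', c' ≠ i → c' ≠ j → M' s' c' = M s' c') : BeadSwap M M' := by
  obtain ⟨hst, a1, a2, a3, a4, a5, a6, a7, a8, a9⟩ := hsw
  refine ⟨i, j, hij, s, t, hst, ?_, ?_, ?_, ?_, ?_, ?_, ?_, ?_, ?_⟩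
  · rw [hMi s, a1]
  · rw [hMj t, a7]
  · rw [hMj s, a6]
  · rw [hMi t, a4]
  · rw [hM'i s, a2]
  · rw [hM'j t, a8]
  · rw [hM'j s, a5]
  · rw [hM'i t, a3]
  · rintro s' c' (⟨hs1, hs2⟩ | ⟨hc1, hc2⟩)
    · by_cases hc : c' = i
      · subst hc; rw [hM'i s', hMi s', (a9 s' hs1 hs2).1]
      by_cases hc' : c' = j
      · subst hc'; rw [hM'j s', hMj s', (a9 s' hs1 hs2).2]
      · exact hoff s' c' hc hc'
    · exact hoff s' c' hc1 hc2

section Connect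

variable {Y Z : Finset (Fin e)} {y z : ℕ}

lemma alpha_swap_gamma (hY : Y.card = y + 1) (hZ : Z.card = z + 1) (hYZ : Disjoint Y Z)
    (u : Fin 6) (k : Fin (y + 1)) (l : Fin (z + 1)) :
    BeadSwap (alphaM Y Z hY u k) (gammaM Y Z hY hZ u k l) := by
  have hdis : ∀ c ∈ Z, c ∉ Y := fun c hc hc' => (Finset.disjoint_left.mp hYZ hc' hc).elim
  have hik : Y.orderEmbOfFin hY k ∈ Y := Finset.orderEmbOfFin_mem Y hY k
  have hjl : Z.orderEmbOfFin hZ l ∈ Z := Finset.orderEmbOfFin_mem Z hZ l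
  have hij : Y.orderEmbOfFin hY k ≠ Z.orderEmbOfFin hZ l := fun h => (hdis _ hjl) (h ▸ hik)
  obtain ⟨s, t, hsw⟩ := swapAG u
  refine beadSwap_of_cols hij hsw ?_ ?_ ?_ ?_ ?_
  · intro s'; simp [alphaM]
  · intro s'
    have h1 : Z.orderEmbOfFin hZ l ∉ Y := hdis _ hjl
    have h2 : Z.orderEmbOfFin hZ l ≠ Y.orderEmbOfFin hY k := hij.symm
    simp [alphaM, h1, h2, hjl]
  · intro s'; simp [gammaM]
  · intro s'
    have h1 : Z.orderEmbOfFin hZ l ∉ Y := hdis _ hjl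
    simp [gammaM, hij.symm, h1, hjl]
  · intro s' c' h1 h2
    simp [alphaM, gammaM, h1, h2]

lemma beta_swap_gamma (hY : Y.card = y + 1) (hZ : Z.card = z + 1) (hYZ : Disjoint Y Z)
    (u : Fin 6) (k : Fin (y + 1)) (l : Fin (z + 1)) :
    BeadSwap (betaM Y Z hZ u l) (gammaM Y Z hY hZ u k l) := by
  have hdis : ∀ c ∈ Z, c ∉ Y := fun c hc hc' => (Finset.disjoint_left.mp hYZ hc' hc).elim
  have hik : Y.orderEmbOfFin hY k ∈ Y := Finset.orderEmbOfFin_mem Y hY k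
  have hjl : Z.orderEmbOfFin hZ l ∈ Z := Finset.orderEmbOfFin_mem Z hZ l
  have hij : Y.orderEmbOfFin hY k ≠ Z.orderEmbOfFin hZ l := fun h => (hdis _ hjl) (h ▸ hik)
  obtain ⟨s, t, hsw⟩ := swapBG u
  refine beadSwap_of_cols hij hsw ?_ ?_ ?_ ?_ ?_
  · intro s'
    have h1 : Y.orderEmbOfFin hY k ∉ Z := fun h => (hdis _ h) hik
    simp [betaM, hij, h1, hik]
  · intro s'; simp [betaM]
  · intro s'; simp [gammaM]
  · intro s'
    have h1 : Z.orderEmbOfFin hZ l ∉ Y := hdis _ hjl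
    simp [gammaM, hij.symm, h1, hjl]
  · intro s' c' h1 h2
    by_cases hcy : c' ∈ Y
    · have hcz : c' ∉ Z := fun h => (hdis _ h) hcy
      simp [betaM, gammaM, h1, h2, hcy, hcz]
    · simp [betaM, gammaM, h1, h2, hcy]

lemma gamma_swap_gammaY (hY : Y.card = y + 1) (hZ : Z.card = z + 1) (hYZ : Disjoint Y Z)
    (u : Fin 6) (k k' : Fin (y + 1)) (l : Fin (z + 1)) (hkk : k ≠ k') :
    BeadSwap (gammaM Y Z hY hZ u k l) (gammaM Y Z hY hZ u k' l) := by
  have hdis : ∀ c ∈ Z, c ∉ Y := fun c hc hc' => (Finset.disjoint_left.mp hYZ hc' hc).elim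
  have hik : Y.orderEmbOfFin hY k ∈ Y := Finset.orderEmbOfFin_mem Y hY k
  have hik' : Y.orderEmbOfFin hY k' ∈ Y := Finset.orderEmbOfFin_mem Y hY k'
  have hjl : Z.orderEmbOfFin hZ l ∈ Z := Finset.orderEmbOfFin_mem Z hZ l
  have hij : Y.orderEmbOfFin hY k ≠ Y.orderEmbOfFin hY k' := by
    intro h
    exact hkk ((Y.orderEmbOfFin hY).injective h)
  have hz1 : Y.orderEmbOfFin hY k ≠ Z.orderEmbOfFin hZ l := fun h => (hdis _ hjl) (h ▸ hik)
  have hz2 : Y.orderEmbOfFin hY k' ≠ Z.orderEmbOfFin hZ l := fun h => (hdis _ hjl) (h ▸ hik')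
  obtain ⟨s, t, hsw⟩ := swapGGY u
  refine beadSwap_of_cols hij hsw ?_ ?_ ?_ ?_ ?_
  · intro s'; simp [gammaM]
  · intro s'; simp [gammaM, hij.symm, hz2, hik']
  · intro s'; simp [gammaM, hij, hz1, hik]
  · intro s'; simp [gammaM]
  · intro s' c' h1 h2
    simp [gammaM, h1, h2]

lemma gamma_swap_gammaZ (hY : Y.card = y + 1) (hZ : Z.card = z + 1) (hYZ : Disjoint Y Z)
    (u : Fin 6) (k : Fin (y + 1)) (l l' : Fin (z + 1)) (hll : l ≠ l') :
    BeadSwap (gammaM Y Z hY hZ u k l) (gammaM Y Z hY hZ u k l') := by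
  have hdis : ∀ c ∈ Z, c ∉ Y := fun c hc hc' => (Finset.disjoint_left.mp hYZ hc' hc).elim
  have hik : Y.orderEmbOfFin hY k ∈ Y := Finset.orderEmbOfFin_mem Y hY k
  have hjl : Z.orderEmbOfFin hZ l ∈ Z := Finset.orderEmbOfFin_mem Z hZ l
  have hjl' : Z.orderEmbOfFin hZ l' ∈ Z := Finset.orderEmbOfFin_mem Z hZ l'
  have hij : Z.orderEmbOfFin hZ l ≠ Z.orderEmbOfFin hZ l' := by
    intro h
    exact hll ((Z.orderEmbOfFin hZ).injective h)
  have hz1 : Z.orderEmbOfFin hZ l ≠ Y.orderEmbOfFin hY k := fun h => (hdis _ hjl) (h ▸ hik)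
  have hz2 : Z.orderEmbOfFin hZ l' ≠ Y.orderEmbOfFin hY k := fun h => (hdis _ hjl') (h ▸ hik)
  have hy1 : Z.orderEmbOfFin hZ l ∉ Y := hdis _ hjl
  have hy2 : Z.orderEmbOfFin hZ l' ∉ Y := hdis _ hjl'
  obtain ⟨s, t, hsw⟩ := swapGGZ u
  refine beadSwap_of_cols hij hsw ?_ ?_ ?_ ?_ ?_
  · intro s'; simp [gammaM, hz1]
  · intro s'; simp [gammaM, hz2, hij.symm, hy2, hjl']
  · intro s'; simp [gammaM, hz1, hij, hy1, hjl]
  · intro s'; simp [gammaM, hz2]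
  · intro s' c' h1 h2
    simp [gammaM, h1, h2]

lemma duset_rel_gamma00 (hY : Y.card = y + 1) (hZ : Z.card = z + 1) (hYZ : Disjoint Y Z)
    (u : Fin 6) {N : Fin 3 → Fin e → Bool} (hN : N ∈ Duset Y Z hY hZ u) :
    Relation.EqvGen BeadSwap N (gammaM Y Z hY hZ u 0 0) := by
  have gstep : ∀ (k : Fin (y + 1)) (l : Fin (z + 1)),
      Relation.EqvGen BeadSwap (gammaM Y Z hY hZ u k l) (gammaM Y Z hY hZ u 0 0) := by
    intro k l
    have s1 : Relation.EqvGen BeadSwap (gammaM Y Z hY hZ u k l) (gammaM Y Z hY hZ u 0 l) := by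
      by_cases hk : k = 0
      · subst hk; exact Relation.EqvGen.refl _
      · exact Relation.EqvGen.rel _ _ (gamma_swap_gammaY hY hZ hYZ u k 0 l hk)
    have s2 : Relation.EqvGen BeadSwap (gammaM Y Z hY hZ u 0 l) (gammaM Y Z hY hZ u 0 0) := by
      by_cases hl : l = 0
      · subst hl; exact Relation.EqvGen.refl _
      · exact Relation.EqvGen.rel _ _ (gamma_swap_gammaZ hY hZ hYZ u 0 l 0 hl)
    exact Relation.EqvGen.trans _ _ _ s1 s2
  obtain ⟨k, rfl⟩ | ⟨l, rfl⟩ | ⟨k, l, rfl⟩ := hN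
  · exact Relation.EqvGen.trans _ _ _
      (Relation.EqvGen.rel _ _ (alpha_swap_gamma hY hZ hYZ u k 0)) (gstep k 0)
  · exact Relation.EqvGen.trans _ _ _
      (Relation.EqvGen.rel _ _ (beta_swap_gamma hY hZ hYZ u 0 l)) (gstep 0 l)
  · exact gstep k l

end Connect


/-- `D^u` is a single bead-swap equivalence class. -/
theorem Duset_eq_beadSwap_class (e : ℕ) (he : 2 ≤ e)
    (X Y Z : Finset (Fin e)) {y z : ℕ} (hY : Y.card = y + 1) (hZ : Z.card = z + 1)
    (hXY : Disjoint X Y) (hXZ : Disjoint X Z) (hYZ : Disjoint Y Z)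
    (hcover : X ∪ Y ∪ Z = Finset.univ)
    (u : Fin 6) (M : Fin 3 → Fin e → Bool) (hM : M ∈ Duset Y Z hY hZ u) :
    {L : Fin 3 → Fin e → Bool | Relation.EqvGen BeadSwap L M} = Duset Y Z hY hZ u := by
  ext L
  simp only [Set.mem_setOf_eq]
  constructor
  · intro h
    have hm := eqvgen_margins h
    have hMs := duset_spec hY hZ hYZ u hM
    exact spec_duset hY hZ hYZ u
      ⟨fun s => (hm.1 s).trans (hMs.1 s), fun c => (hm.2 c).trans (hMs.2 c)⟩
  · intro hL
    exact Relation.EqvGen.trans _ _ _ (duset_rel_gamma00 hY hZ hYZ u hL)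
      (Relation.EqvGen.symm _ _ (duset_rel_gamma00 hY hZ hYZ u hM))


end
end AK
end

section
/- Let e ≥ 2, r = 3, with D^u as above for a fixed u ∈ {1,…,6}. Then: (i) for 1 ≤ k ≤ y+1, the set of matrices obtained from α^u_k by a single bead swap is exactly {α^u_{k′} : k′ ≠ k} ∪ {β^u_l : 1 ≤ l ≤ z+1} ∪ {γ^u_{kl} : 1 ≤ l ≤ z+1}; (ii) for 1 ≤ l ≤ z+1, the set of matrices obtained from β^u_l by a single bead swap is exactly {β^u_{l′} : l′ ≠ l} ∪ {α^u_k : 1 ≤ k ≤ y+1} ∪ {γ^u_{kl} : 1 ≤ k ≤ y+1}; (iii) for 1 ≤ k ≤ y+1 and 1 ≤ l ≤ z+1, the set of matrices obtained from γ^u_{kl} by a single bead swap is exactly {γ^u_{k′l} : k′ ≠ k} ∪ {γ^u_{kl′} : l′ ≠ l} ∪ {α^u_k} ∪ {β^u_l}. -/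
open scoped Classical

namespace AK
noncomputable section



variable {e : ℕ}

/-! ### Auxiliary machinery for analysing bead swaps -/

/-- Transpose the entries of a column vector at rows `s` and `t`. -/
def swapV (v : Fin 3 → Bool) (s t : Fin 3) : Fin 3 → Bool :=
  fun r => if r = s then v t else if r = t then v s else v r

/-- Build a matrix from its columns. -/
def ofCols {e : ℕ} (f : Fin e → Fin 3 → Bool) : Fin 3 → Fin e → Bool :=
  fun s c => f c s

/-- The column map after a bead swap in columns `i, j` and rows `s, t`. -/
def swapCols {e : ℕ} (f : Fin e → Fin 3 → Bool) (i j : Fin e) (s t : Fin 3) :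
    Fin e → Fin 3 → Bool :=
  fun c => if c = i then swapV (f i) s t else if c = j then swapV (f j) s t else f c

lemma swapCols_comm {e : ℕ} (f : Fin e → Fin 3 → Bool) {i j : Fin e} (hij : i ≠ j)
    (s t : Fin 3) : swapCols f i j s t = swapCols f j i s t := by
  funext c
  by_cases hc : c = i
  · simp [swapCols, hc, hij]
  · by_cases hc' : c = j
    · simp [swapCols, hc', Ne.symm hij, hc]
    · simp [swapCols, hc, hc']

lemma beadSwap_ofCols_iff {e : ℕ} (f : Fin e → Fin 3 → Bool) (L : Fin 3 → Fin e → Bool) :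
    BeadSwap (ofCols f) L ↔
      ∃ i j : Fin e, i ≠ j ∧ ∃ s t : Fin 3, s ≠ t ∧
        f i s = true ∧ f j t = true ∧ f j s = false ∧ f i t = false ∧
        L = ofCols (swapCols f i j s t) := by
  constructor
  · rintro ⟨i, j, hij, s, t, hst, h1, h2, h3, h4, h5, h6, h7, h8, hoth⟩
    refine ⟨i, j, hij, s, t, hst, h1, h2, h3, h4, ?_⟩
    funext s' c
    by_cases hc : c = i
    · subst hc
      by_cases hs' : s' = s
      · subst hs'
        simpa [ofCols, swapCols, swapV] using h5.trans h4.symm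
      · by_cases ht' : s' = t
        · subst ht'
          simpa [ofCols, swapCols, swapV, hs'] using h8.trans h1.symm
        · have := hoth s' c (Or.inl ⟨hs', ht'⟩)
          simpa [ofCols, swapCols, swapV, hs', ht'] using this
    · by_cases hc' : c = j
      · subst hc'
        by_cases hs' : s' = s
        · subst hs'
          simpa [ofCols, swapCols, swapV, hc] using h7.trans h2.symm
        · by_cases ht' : s' = t
          · subst ht'
            simpa [ofCols, swapCols, swapV, hc, hs'] using h6.trans h3.symm
          · have := hoth s' c (Or.inl ⟨hs', ht'⟩)
            simpa [ofCols, swapCols, swapV, hc, hs', ht'] using this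
      · have := hoth s' c (Or.inr ⟨hc, hc'⟩)
        simpa [ofCols, swapCols, hc, hc'] using this
  · rintro ⟨i, j, hij, s, t, hst, h1, h2, h3, h4, rfl⟩
    refine ⟨i, j, hij, s, t, hst, h1, h2, h3, h4, ?_, ?_, ?_, ?_, ?_⟩
    · simpa [ofCols, swapCols, swapV] using h4
    · simpa [ofCols, swapCols, swapV, Ne.symm hij, Ne.symm hst] using h3
    · simpa [ofCols, swapCols, swapV, Ne.symm hij] using h2
    · simpa [ofCols, swapCols, swapV, Ne.symm hst] using h1
    · rintro s' c (⟨hs, ht⟩ | ⟨hci, hcj⟩)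
      · simp only [ofCols, swapCols, swapV, if_neg hs, if_neg ht]
        split_ifs <;> simp_all [swapV]
      · simp [ofCols, swapCols, hci, hcj]

/-- The column map of `α^u_k`. -/
def acols (Y Z : Finset (Fin e)) {y : ℕ} (hY : Y.card = y + 1) (u : Fin 6)
    (k : Fin (y + 1)) : Fin e → Fin 3 → Bool :=
  fun c =>
    if c = Y.orderEmbOfFin hY k then aacol u
    else if c ∈ Y then ycol u
    else if c ∈ Z then zcol u
    else fun _ => false

/-- The column map of `β^u_l`. -/
def bcols (Y Z : Finset (Fin e)) {z : ℕ} (hZ : Z.card = z + 1) (u : Fin 6)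
    (l : Fin (z + 1)) : Fin e → Fin 3 → Bool :=
  fun c =>
    if c = Z.orderEmbOfFin hZ l then abcol u
    else if c ∈ Z then zcol u
    else if c ∈ Y then ycol u
    else fun _ => false

/-- The column map of `γ^u_{kl}`. -/
def gcols (Y Z : Finset (Fin e)) {y z : ℕ} (hY : Y.card = y + 1) (hZ : Z.card = z + 1)
    (u : Fin 6) (k : Fin (y + 1)) (l : Fin (z + 1)) : Fin e → Fin 3 → Bool :=
  fun c =>
    if c = Y.orderEmbOfFin hY k then oycol u
    else if c = Z.orderEmbOfFin hZ l then ozcol u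
    else if c ∈ Y then ycol u
    else if c ∈ Z then zcol u
    else fun _ => false

lemma alphaM_ofCols (Y Z : Finset (Fin e)) {y : ℕ} (hY : Y.card = y + 1) (u : Fin 6)
    (k : Fin (y + 1)) : alphaM Y Z hY u k = ofCols (acols Y Z hY u k) := by
  funext s c
  simp only [alphaM, ofCols, acols]
  split_ifs <;> rfl

lemma betaM_ofCols (Y Z : Finset (Fin e)) {z : ℕ} (hZ : Z.card = z + 1) (u : Fin 6)
    (l : Fin (z + 1)) : betaM Y Z hZ u l = ofCols (bcols Y Z hZ u l) := by
  funext s c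
  simp only [betaM, ofCols, bcols]
  split_ifs <;> rfl

lemma gammaM_ofCols (Y Z : Finset (Fin e)) {y z : ℕ} (hY : Y.card = y + 1)
    (hZ : Z.card = z + 1) (u : Fin 6) (k : Fin (y + 1)) (l : Fin (z + 1)) :
    gammaM Y Z hY hZ u k l = ofCols (gcols Y Z hY hZ u k l) := by
  funext s c
  simp only [gammaM, ofCols, gcols]
  split_ifs <;> rfl

lemma exists_orderEmbOfFin_eq {Y : Finset (Fin e)} {y : ℕ} (hY : Y.card = y + 1) {j : Fin e}
    (hj : j ∈ Y) : ∃ k, Y.orderEmbOfFin hY k = j := by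
  have h : j ∈ Set.range (Y.orderEmbOfFin hY) := by
    rw [Finset.range_orderEmbOfFin]; exact_mod_cast hj
  exact h

/-! #### Finite checks on the seven column vectors (verified by `decide`) -/

lemma swAY : ∀ (u : Fin 6) (s t : Fin 3),
    aacol u s = true → ycol u t = true → ycol u s = false → aacol u t = false →
    swapV (aacol u) s t = ycol u ∧ swapV (ycol u) s t = aacol u := by decide

lemma swYA : ∀ (u : Fin 6) (s t : Fin 3),
    ycol u s = true → aacol u t = true → aacol u s = false → ycol u t = false →
    swapV (ycol u) s t = aacol u ∧ swapV (aacol u) s t = ycol u := by decide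

lemma swAZ : ∀ (u : Fin 6) (s t : Fin 3),
    aacol u s = true → zcol u t = true → zcol u s = false → aacol u t = false →
    (swapV (aacol u) s t = ycol u ∧ swapV (zcol u) s t = abcol u) ∨
    (swapV (aacol u) s t = oycol u ∧ swapV (zcol u) s t = ozcol u) := by decide

lemma swZA : ∀ (u : Fin 6) (s t : Fin 3),
    zcol u s = true → aacol u t = true → aacol u s = false → zcol u t = false →
    (swapV (aacol u) s t = ycol u ∧ swapV (zcol u) s t = abcol u) ∨
    (swapV (aacol u) s t = oycol u ∧ swapV (zcol u) s t = ozcol u) := by decide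

lemma swYZ : ∀ (u : Fin 6) (s t : Fin 3),
    ycol u s = true → zcol u t = true → zcol u s = false → ycol u t = false →
    False := by decide

lemma swZY : ∀ (u : Fin 6) (s t : Fin 3),
    zcol u s = true → ycol u t = true → ycol u s = false → zcol u t = false →
    False := by decide

lemma swBZ : ∀ (u : Fin 6) (s t : Fin 3),
    abcol u s = true → zcol u t = true → zcol u s = false → abcol u t = false →
    swapV (abcol u) s t = zcol u ∧ swapV (zcol u) s t = abcol u := by decide

lemma swZB : ∀ (u : Fin 6) (s t : Fin 3),
    zcol u s = true → abcol u t = true → abcol u s = false → zcol u t = false →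
    swapV (zcol u) s t = abcol u ∧ swapV (abcol u) s t = zcol u := by decide

lemma swBY : ∀ (u : Fin 6) (s t : Fin 3),
    abcol u s = true → ycol u t = true → ycol u s = false → abcol u t = false →
    (swapV (abcol u) s t = zcol u ∧ swapV (ycol u) s t = aacol u) ∨
    (swapV (abcol u) s t = ozcol u ∧ swapV (ycol u) s t = oycol u) := by decide

lemma swYB : ∀ (u : Fin 6) (s t : Fin 3),
    ycol u s = true → abcol u t = true → abcol u s = false → ycol u t = false →
    (swapV (abcol u) s t = zcol u ∧ swapV (ycol u) s t = aacol u) ∨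
    (swapV (abcol u) s t = ozcol u ∧ swapV (ycol u) s t = oycol u) := by decide

lemma swOyY : ∀ (u : Fin 6) (s t : Fin 3),
    oycol u s = true → ycol u t = true → ycol u s = false → oycol u t = false →
    swapV (oycol u) s t = ycol u ∧ swapV (ycol u) s t = oycol u := by decide

lemma swYOy : ∀ (u : Fin 6) (s t : Fin 3),
    ycol u s = true → oycol u t = true → oycol u s = false → ycol u t = false →
    swapV (oycol u) s t = ycol u ∧ swapV (ycol u) s t = oycol u := by decide

lemma swOzZ : ∀ (u : Fin 6) (s t : Fin 3),
    ozcol u s = true → zcol u t = true → zcol u s = false → ozcol u t = false →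
    swapV (ozcol u) s t = zcol u ∧ swapV (zcol u) s t = ozcol u := by decide

lemma swZOz : ∀ (u : Fin 6) (s t : Fin 3),
    zcol u s = true → ozcol u t = true → ozcol u s = false → zcol u t = false →
    swapV (ozcol u) s t = zcol u ∧ swapV (zcol u) s t = ozcol u := by decide

lemma swOyOz : ∀ (u : Fin 6) (s t : Fin 3),
    oycol u s = true → ozcol u t = true → ozcol u s = false → oycol u t = false →
    (swapV (oycol u) s t = aacol u ∧ swapV (ozcol u) s t = zcol u) ∨
    (swapV (oycol u) s t = ycol u ∧ swapV (ozcol u) s t = abcol u) := by decide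

lemma swOzOy : ∀ (u : Fin 6) (s t : Fin 3),
    ozcol u s = true → oycol u t = true → oycol u s = false → ozcol u t = false →
    (swapV (oycol u) s t = aacol u ∧ swapV (ozcol u) s t = zcol u) ∨
    (swapV (oycol u) s t = ycol u ∧ swapV (ozcol u) s t = abcol u) := by decide

lemma swOyZ : ∀ (u : Fin 6) (s t : Fin 3),
    oycol u s = true → zcol u t = true → zcol u s = false → oycol u t = false →
    False := by decide

lemma swZOy : ∀ (u : Fin 6) (s t : Fin 3),
    zcol u s = true → oycol u t = true → oycol u s = false → zcol u t = false →
    False := by decide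

lemma swOzY : ∀ (u : Fin 6) (s t : Fin 3),
    ozcol u s = true → ycol u t = true → ycol u s = false → ozcol u t = false →
    False := by decide

lemma swYOz : ∀ (u : Fin 6) (s t : Fin 3),
    ycol u s = true → ozcol u t = true → ozcol u s = false → ycol u t = false →
    False := by decide

lemma exAY : ∀ u : Fin 6, ∃ s t : Fin 3, s ≠ t ∧
    aacol u s = true ∧ ycol u t = true ∧ ycol u s = false ∧ aacol u t = false ∧
    swapV (aacol u) s t = ycol u ∧ swapV (ycol u) s t = aacol u := by decide

lemma exAZb : ∀ u : Fin 6, ∃ s t : Fin 3, s ≠ t ∧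
    aacol u s = true ∧ zcol u t = true ∧ zcol u s = false ∧ aacol u t = false ∧
    swapV (aacol u) s t = ycol u ∧ swapV (zcol u) s t = abcol u := by decide

lemma exAZg : ∀ u : Fin 6, ∃ s t : Fin 3, s ≠ t ∧
    aacol u s = true ∧ zcol u t = true ∧ zcol u s = false ∧ aacol u t = false ∧
    swapV (aacol u) s t = oycol u ∧ swapV (zcol u) s t = ozcol u := by decide

lemma exBZ : ∀ u : Fin 6, ∃ s t : Fin 3, s ≠ t ∧
    abcol u s = true ∧ zcol u t = true ∧ zcol u s = false ∧ abcol u t = false ∧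
    swapV (abcol u) s t = zcol u ∧ swapV (zcol u) s t = abcol u := by decide

lemma exBYa : ∀ u : Fin 6, ∃ s t : Fin 3, s ≠ t ∧
    abcol u s = true ∧ ycol u t = true ∧ ycol u s = false ∧ abcol u t = false ∧
    swapV (abcol u) s t = zcol u ∧ swapV (ycol u) s t = aacol u := by decide

lemma exBYg : ∀ u : Fin 6, ∃ s t : Fin 3, s ≠ t ∧
    abcol u s = true ∧ ycol u t = true ∧ ycol u s = false ∧ abcol u t = false ∧
    swapV (abcol u) s t = ozcol u ∧ swapV (ycol u) s t = oycol u := by decide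

lemma exGY : ∀ u : Fin 6, ∃ s t : Fin 3, s ≠ t ∧
    oycol u s = true ∧ ycol u t = true ∧ ycol u s = false ∧ oycol u t = false ∧
    swapV (oycol u) s t = ycol u ∧ swapV (ycol u) s t = oycol u := by decide

lemma exGZ : ∀ u : Fin 6, ∃ s t : Fin 3, s ≠ t ∧
    ozcol u s = true ∧ zcol u t = true ∧ zcol u s = false ∧ ozcol u t = false ∧
    swapV (ozcol u) s t = zcol u ∧ swapV (zcol u) s t = ozcol u := by decide

lemma exGa : ∀ u : Fin 6, ∃ s t : Fin 3, s ≠ t ∧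
    oycol u s = true ∧ ozcol u t = true ∧ ozcol u s = false ∧ oycol u t = false ∧
    swapV (oycol u) s t = aacol u ∧ swapV (ozcol u) s t = zcol u := by decide

lemma exGb : ∀ u : Fin 6, ∃ s t : Fin 3, s ≠ t ∧
    oycol u s = true ∧ ozcol u t = true ∧ ozcol u s = false ∧ oycol u t = false ∧
    swapV (oycol u) s t = ycol u ∧ swapV (ozcol u) s t = abcol u := by decide

/-! #### How a bead swap transforms the column maps -/

section Maps

variable {Y Z : Finset (Fin e)} {y z : ℕ} (hY : Y.card = y + 1) (hZ : Z.card = z + 1)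
  (u : Fin 6) (s t : Fin 3)

lemma mapAA {k k' : Fin (y + 1)} (hkk : k ≠ k')
    (hw1 : swapV (aacol u) s t = ycol u) (hw2 : swapV (ycol u) s t = aacol u) :
    swapCols (acols Y Z hY u k) (Y.orderEmbOfFin hY k) (Y.orderEmbOfFin hY k') s t
      = acols Y Z hY u k' := by
  have hne : Y.orderEmbOfFin hY k ≠ Y.orderEmbOfFin hY k' :=
    fun h => hkk ((Y.orderEmbOfFin hY).injective h)
  funext c
  by_cases hc1 : c = Y.orderEmbOfFin hY k
  · rw [hc1]
    simp [swapCols, acols, hne, Finset.orderEmbOfFin_mem, hw1]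
  · by_cases hc2 : c = Y.orderEmbOfFin hY k'
    · rw [hc2]
      simp [swapCols, acols, Ne.symm hne, Finset.orderEmbOfFin_mem, hw2]
    · simp [swapCols, acols, hc1, hc2]

lemma mapAB (hYZ : Disjoint Y Z) {k : Fin (y + 1)} {l : Fin (z + 1)}
    (hw1 : swapV (aacol u) s t = ycol u) (hw2 : swapV (zcol u) s t = abcol u) :
    swapCols (acols Y Z hY u k) (Y.orderEmbOfFin hY k) (Z.orderEmbOfFin hZ l) s t
      = bcols Y Z hZ u l := by
  have hkY : Y.orderEmbOfFin hY k ∈ Y := Finset.orderEmbOfFin_mem Y hY k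
  have hlZ : Z.orderEmbOfFin hZ l ∈ Z := Finset.orderEmbOfFin_mem Z hZ l
  have hkZ : Y.orderEmbOfFin hY k ∉ Z := Finset.disjoint_left.mp hYZ hkY
  have hlY : Z.orderEmbOfFin hZ l ∉ Y := Finset.disjoint_right.mp hYZ hlZ
  have hne : Y.orderEmbOfFin hY k ≠ Z.orderEmbOfFin hZ l := fun h => hkZ (h ▸ hlZ)
  funext c
  by_cases hc1 : c = Y.orderEmbOfFin hY k
  · rw [hc1]
    simp [swapCols, bcols, acols, hne, hkY, hkZ, hw1]
  · by_cases hc2 : c = Z.orderEmbOfFin hZ l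
    · rw [hc2]
      simp [swapCols, bcols, acols, Ne.symm hne, hlZ, hlY, hw2]
    · by_cases hcY : c ∈ Y
      · have hcZ : c ∉ Z := Finset.disjoint_left.mp hYZ hcY
        simp [swapCols, bcols, acols, hc1, hc2, hcY, hcZ]
      · simp [swapCols, bcols, acols, hc1, hc2, hcY]

lemma mapAG (hYZ : Disjoint Y Z) {k : Fin (y + 1)} {l : Fin (z + 1)}
    (hw1 : swapV (aacol u) s t = oycol u) (hw2 : swapV (zcol u) s t = ozcol u) :
    swapCols (acols Y Z hY u k) (Y.orderEmbOfFin hY k) (Z.orderEmbOfFin hZ l) s t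
      = gcols Y Z hY hZ u k l := by
  have hkY : Y.orderEmbOfFin hY k ∈ Y := Finset.orderEmbOfFin_mem Y hY k
  have hlZ : Z.orderEmbOfFin hZ l ∈ Z := Finset.orderEmbOfFin_mem Z hZ l
  have hkZ : Y.orderEmbOfFin hY k ∉ Z := Finset.disjoint_left.mp hYZ hkY
  have hlY : Z.orderEmbOfFin hZ l ∉ Y := Finset.disjoint_right.mp hYZ hlZ
  have hne : Y.orderEmbOfFin hY k ≠ Z.orderEmbOfFin hZ l := fun h => hkZ (h ▸ hlZ)
  funext c
  by_cases hc1 : c = Y.orderEmbOfFin hY k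
  · rw [hc1]
    simp [swapCols, gcols, acols, hne, hw1]
  · by_cases hc2 : c = Z.orderEmbOfFin hZ l
    · rw [hc2]
      simp [swapCols, gcols, acols, Ne.symm hne, hlZ, hlY, hw2]
    · simp [swapCols, gcols, acols, hc1, hc2]

lemma mapBB {l l' : Fin (z + 1)} (hll : l ≠ l')
    (hw1 : swapV (abcol u) s t = zcol u) (hw2 : swapV (zcol u) s t = abcol u) :
    swapCols (bcols Y Z hZ u l) (Z.orderEmbOfFin hZ l) (Z.orderEmbOfFin hZ l') s t
      = bcols Y Z hZ u l' := by
  have hne : Z.orderEmbOfFin hZ l ≠ Z.orderEmbOfFin hZ l' :=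
    fun h => hll ((Z.orderEmbOfFin hZ).injective h)
  funext c
  by_cases hc1 : c = Z.orderEmbOfFin hZ l
  · rw [hc1]
    simp [swapCols, bcols, hne, Finset.orderEmbOfFin_mem, hw1]
  · by_cases hc2 : c = Z.orderEmbOfFin hZ l'
    · rw [hc2]
      simp [swapCols, bcols, Ne.symm hne, Finset.orderEmbOfFin_mem, hw2]
    · simp [swapCols, bcols, hc1, hc2]

lemma mapBA (hYZ : Disjoint Y Z) {k : Fin (y + 1)} {l : Fin (z + 1)}
    (hw1 : swapV (abcol u) s t = zcol u) (hw2 : swapV (ycol u) s t = aacol u) :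
    swapCols (bcols Y Z hZ u l) (Z.orderEmbOfFin hZ l) (Y.orderEmbOfFin hY k) s t
      = acols Y Z hY u k := by
  have hkY : Y.orderEmbOfFin hY k ∈ Y := Finset.orderEmbOfFin_mem Y hY k
  have hlZ : Z.orderEmbOfFin hZ l ∈ Z := Finset.orderEmbOfFin_mem Z hZ l
  have hkZ : Y.orderEmbOfFin hY k ∉ Z := Finset.disjoint_left.mp hYZ hkY
  have hlY : Z.orderEmbOfFin hZ l ∉ Y := Finset.disjoint_right.mp hYZ hlZ
  have hne : Z.orderEmbOfFin hZ l ≠ Y.orderEmbOfFin hY k := fun h => hlY (h ▸ hkY)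
  funext c
  by_cases hc1 : c = Z.orderEmbOfFin hZ l
  · rw [hc1]
    simp [swapCols, bcols, acols, hne, hlZ, hlY, hw1]
  · by_cases hc2 : c = Y.orderEmbOfFin hY k
    · rw [hc2]
      simp [swapCols, bcols, acols, Ne.symm hne, hkY, hkZ, hw2]
    · by_cases hcY : c ∈ Y
      · have hcZ : c ∉ Z := Finset.disjoint_left.mp hYZ hcY
        simp [swapCols, bcols, acols, hc1, hc2, hcY, hcZ]
      · simp [swapCols, bcols, acols, hc1, hc2, hcY]

lemma mapBG (hYZ : Disjoint Y Z) {k : Fin (y + 1)} {l : Fin (z + 1)}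
    (hw1 : swapV (abcol u) s t = ozcol u) (hw2 : swapV (ycol u) s t = oycol u) :
    swapCols (bcols Y Z hZ u l) (Z.orderEmbOfFin hZ l) (Y.orderEmbOfFin hY k) s t
      = gcols Y Z hY hZ u k l := by
  have hkY : Y.orderEmbOfFin hY k ∈ Y := Finset.orderEmbOfFin_mem Y hY k
  have hlZ : Z.orderEmbOfFin hZ l ∈ Z := Finset.orderEmbOfFin_mem Z hZ l
  have hkZ : Y.orderEmbOfFin hY k ∉ Z := Finset.disjoint_left.mp hYZ hkY
  have hlY : Z.orderEmbOfFin hZ l ∉ Y := Finset.disjoint_right.mp hYZ hlZ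
  have hne : Z.orderEmbOfFin hZ l ≠ Y.orderEmbOfFin hY k := fun h => hlY (h ▸ hkY)
  funext c
  by_cases hc1 : c = Z.orderEmbOfFin hZ l
  · rw [hc1]
    simp [swapCols, bcols, gcols, hne, hlZ, hlY, hw1]
  · by_cases hc2 : c = Y.orderEmbOfFin hY k
    · rw [hc2]
      simp [swapCols, bcols, gcols, Ne.symm hne, hkY, hkZ, hw2]
    · by_cases hcY : c ∈ Y
      · have hcZ : c ∉ Z := Finset.disjoint_left.mp hYZ hcY
        simp [swapCols, bcols, gcols, hc1, hc2, hcY, hcZ]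
      · simp [swapCols, bcols, gcols, hc1, hc2, hcY]

lemma mapGK (hYZ : Disjoint Y Z) {k k' : Fin (y + 1)} {l : Fin (z + 1)} (hkk : k ≠ k')
    (hw1 : swapV (oycol u) s t = ycol u) (hw2 : swapV (ycol u) s t = oycol u) :
    swapCols (gcols Y Z hY hZ u k l) (Y.orderEmbOfFin hY k) (Y.orderEmbOfFin hY k') s t
      = gcols Y Z hY hZ u k' l := by
  have hkY : Y.orderEmbOfFin hY k ∈ Y := Finset.orderEmbOfFin_mem Y hY k
  have hk'Y : Y.orderEmbOfFin hY k' ∈ Y := Finset.orderEmbOfFin_mem Y hY k'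
  have hlZ : Z.orderEmbOfFin hZ l ∈ Z := Finset.orderEmbOfFin_mem Z hZ l
  have hkZl : Y.orderEmbOfFin hY k ≠ Z.orderEmbOfFin hZ l :=
    fun h => (Finset.disjoint_left.mp hYZ hkY) (h ▸ hlZ)
  have hk'Zl : Y.orderEmbOfFin hY k' ≠ Z.orderEmbOfFin hZ l :=
    fun h => (Finset.disjoint_left.mp hYZ hk'Y) (h ▸ hlZ)
  have hne : Y.orderEmbOfFin hY k ≠ Y.orderEmbOfFin hY k' :=
    fun h => hkk ((Y.orderEmbOfFin hY).injective h)
  funext c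
  by_cases hc1 : c = Y.orderEmbOfFin hY k
  · rw [hc1]
    simp [swapCols, gcols, hne, hkZl, hkY, hw1]
  · by_cases hc2 : c = Y.orderEmbOfFin hY k'
    · rw [hc2]
      simp [swapCols, gcols, Ne.symm hne, hk'Zl, hk'Y, hw2]
    · simp [swapCols, gcols, hc1, hc2]

lemma mapGL (hYZ : Disjoint Y Z) {k : Fin (y + 1)} {l l' : Fin (z + 1)} (hll : l ≠ l')
    (hw1 : swapV (ozcol u) s t = zcol u) (hw2 : swapV (zcol u) s t = ozcol u) :
    swapCols (gcols Y Z hY hZ u k l) (Z.orderEmbOfFin hZ l) (Z.orderEmbOfFin hZ l') s t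
      = gcols Y Z hY hZ u k l' := by
  have hkY : Y.orderEmbOfFin hY k ∈ Y := Finset.orderEmbOfFin_mem Y hY k
  have hlZ : Z.orderEmbOfFin hZ l ∈ Z := Finset.orderEmbOfFin_mem Z hZ l
  have hl'Z : Z.orderEmbOfFin hZ l' ∈ Z := Finset.orderEmbOfFin_mem Z hZ l'
  have hlY : Z.orderEmbOfFin hZ l ∉ Y := Finset.disjoint_right.mp hYZ hlZ
  have hl'Y : Z.orderEmbOfFin hZ l' ∉ Y := Finset.disjoint_right.mp hYZ hl'Z
  have hlk : Z.orderEmbOfFin hZ l ≠ Y.orderEmbOfFin hY k := fun h => hlY (h ▸ hkY)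
  have hl'k : Z.orderEmbOfFin hZ l' ≠ Y.orderEmbOfFin hY k := fun h => hl'Y (h ▸ hkY)
  have hne : Z.orderEmbOfFin hZ l ≠ Z.orderEmbOfFin hZ l' :=
    fun h => hll ((Z.orderEmbOfFin hZ).injective h)
  funext c
  by_cases hc1 : c = Z.orderEmbOfFin hZ l
  · rw [hc1]
    simp [swapCols, gcols, hlk, hne, hlY, hlZ, hw1]
  · by_cases hc2 : c = Z.orderEmbOfFin hZ l'
    · rw [hc2]
      simp [swapCols, gcols, hl'k, Ne.symm hne, hl'Y, hl'Z, hw2]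
    · simp [swapCols, gcols, hc1, hc2]

lemma mapGA (hYZ : Disjoint Y Z) {k : Fin (y + 1)} {l : Fin (z + 1)}
    (hw1 : swapV (oycol u) s t = aacol u) (hw2 : swapV (ozcol u) s t = zcol u) :
    swapCols (gcols Y Z hY hZ u k l) (Y.orderEmbOfFin hY k) (Z.orderEmbOfFin hZ l) s t
      = acols Y Z hY u k := by
  have hkY : Y.orderEmbOfFin hY k ∈ Y := Finset.orderEmbOfFin_mem Y hY k
  have hlZ : Z.orderEmbOfFin hZ l ∈ Z := Finset.orderEmbOfFin_mem Z hZ l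
  have hlY : Z.orderEmbOfFin hZ l ∉ Y := Finset.disjoint_right.mp hYZ hlZ
  have hne : Y.orderEmbOfFin hY k ≠ Z.orderEmbOfFin hZ l := fun h => hlY (h ▸ hkY)
  funext c
  by_cases hc1 : c = Y.orderEmbOfFin hY k
  · rw [hc1]
    simp [swapCols, gcols, acols, hne, hw1]
  · by_cases hc2 : c = Z.orderEmbOfFin hZ l
    · rw [hc2]
      simp [swapCols, gcols, acols, Ne.symm hne, hlY, hlZ, hw2]
    · simp [swapCols, gcols, acols, hc1, hc2]

lemma mapGB (hYZ : Disjoint Y Z) {k : Fin (y + 1)} {l : Fin (z + 1)}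
    (hw1 : swapV (oycol u) s t = ycol u) (hw2 : swapV (ozcol u) s t = abcol u) :
    swapCols (gcols Y Z hY hZ u k l) (Y.orderEmbOfFin hY k) (Z.orderEmbOfFin hZ l) s t
      = bcols Y Z hZ u l := by
  have hkY : Y.orderEmbOfFin hY k ∈ Y := Finset.orderEmbOfFin_mem Y hY k
  have hlZ : Z.orderEmbOfFin hZ l ∈ Z := Finset.orderEmbOfFin_mem Z hZ l
  have hkZ : Y.orderEmbOfFin hY k ∉ Z := Finset.disjoint_left.mp hYZ hkY
  have hlY : Z.orderEmbOfFin hZ l ∉ Y := Finset.disjoint_right.mp hYZ hlZ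
  have hne : Y.orderEmbOfFin hY k ≠ Z.orderEmbOfFin hZ l := fun h => hlY (h ▸ hkY)
  funext c
  by_cases hc1 : c = Y.orderEmbOfFin hY k
  · rw [hc1]
    simp [swapCols, gcols, bcols, hne, hkY, hkZ, hw1]
  · by_cases hc2 : c = Z.orderEmbOfFin hZ l
    · rw [hc2]
      simp [swapCols, gcols, bcols, Ne.symm hne, hw2]
    · by_cases hcY : c ∈ Y
      · have hcZ : c ∉ Z := Finset.disjoint_left.mp hYZ hcY
        simp [swapCols, gcols, bcols, hc1, hc2, hcY, hcZ]
      · simp [swapCols, gcols, bcols, hc1, hc2, hcY]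

end Maps

/-- The matrices obtained from an element of `D^u` by a single
bead swap. -/
theorem Duset_single_beadSwaps (e : ℕ) (he : 2 ≤ e)
    (X Y Z : Finset (Fin e)) {y z : ℕ} (hY : Y.card = y + 1) (hZ : Z.card = z + 1)
    (hXY : Disjoint X Y) (hXZ : Disjoint X Z) (hYZ : Disjoint Y Z)
    (hcover : X ∪ Y ∪ Z = Finset.univ) (u : Fin 6) :
    (∀ k : Fin (y + 1),
      {L : Fin 3 → Fin e → Bool | BeadSwap (alphaM Y Z hY u k) L} =
        {L | (∃ k', k' ≠ k ∧ L = alphaM Y Z hY u k') ∨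
             (∃ l, L = betaM Y Z hZ u l) ∨
             (∃ l, L = gammaM Y Z hY hZ u k l)}) ∧
    (∀ l : Fin (z + 1),
      {L : Fin 3 → Fin e → Bool | BeadSwap (betaM Y Z hZ u l) L} =
        {L | (∃ l', l' ≠ l ∧ L = betaM Y Z hZ u l') ∨
             (∃ k, L = alphaM Y Z hY u k) ∨
             (∃ k, L = gammaM Y Z hY hZ u k l)}) ∧
    (∀ (k : Fin (y + 1)) (l : Fin (z + 1)),
      {L : Fin 3 → Fin e → Bool | BeadSwap (gammaM Y Z hY hZ u k l) L} =
        {L | (∃ k', k' ≠ k ∧ L = gammaM Y Z hY hZ u k' l) ∨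
             (∃ l', l' ≠ l ∧ L = gammaM Y Z hY hZ u k l') ∨
             L = alphaM Y Z hY u k ∨ L = betaM Y Z hZ u l}) := by
  refine ⟨?_, ?_, ?_⟩
  · -- part (i): swaps from `α^u_k`
    intro k
    have hkY : Y.orderEmbOfFin hY k ∈ Y := Finset.orderEmbOfFin_mem Y hY k
    ext L
    simp only [Set.mem_setOf_eq]
    rw [alphaM_ofCols, beadSwap_ofCols_iff]
    constructor
    · rintro ⟨i, j, hij, s, t, hst, h1, h2, h3, h4, rfl⟩
      by_cases hi1 : i = Y.orderEmbOfFin hY k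
      · have hfi : acols Y Z hY u k i = aacol u := by simp [acols, hi1]
        rw [hfi] at h1 h4
        by_cases hjY : j ∈ Y
        · have hj1 : j ≠ Y.orderEmbOfFin hY k := fun h => hij (hi1.trans h.symm)
          have hfj : acols Y Z hY u k j = ycol u := by simp [acols, hj1, hjY]
          rw [hfj] at h2 h3
          obtain ⟨hw1, hw2⟩ := swAY u s t h1 h2 h3 h4
          obtain ⟨k', hk'⟩ := exists_orderEmbOfFin_eq hY hjY
          subst hi1; subst hk'
          have hkk : k ≠ k' := fun h => hij (by rw [h])
          exact Or.inl ⟨k', fun h => hkk h.symm, by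
            rw [alphaM_ofCols]; exact congrArg ofCols (mapAA hY u s t hkk hw1 hw2)⟩
        · have hj1 : j ≠ Y.orderEmbOfFin hY k := fun h => hjY (h ▸ hkY)
          by_cases hjZ : j ∈ Z
          · have hfj : acols Y Z hY u k j = zcol u := by simp [acols, hj1, hjY, hjZ]
            rw [hfj] at h2 h3
            obtain ⟨l, hl⟩ := exists_orderEmbOfFin_eq hZ hjZ
            subst hi1; subst hl
            rcases swAZ u s t h1 h2 h3 h4 with ⟨hw1, hw2⟩ | ⟨hw1, hw2⟩
            · exact Or.inr (Or.inl ⟨l, by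
                rw [betaM_ofCols]; exact congrArg ofCols (mapAB hY hZ u s t hYZ hw1 hw2)⟩)
            · exact Or.inr (Or.inr ⟨l, by
                rw [gammaM_ofCols]; exact congrArg ofCols (mapAG hY hZ u s t hYZ hw1 hw2)⟩)
          · have hfj : acols Y Z hY u k j = fun _ => false := by
              simp [acols, hj1, hjY, hjZ]
            rw [hfj] at h2
            simp at h2
      · by_cases hiY : i ∈ Y
        · have hfi : acols Y Z hY u k i = ycol u := by simp [acols, hi1, hiY]
          rw [hfi] at h1 h4
          by_cases hj1 : j = Y.orderEmbOfFin hY k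
          · have hfj : acols Y Z hY u k j = aacol u := by simp [acols, hj1]
            rw [hfj] at h2 h3
            obtain ⟨hw1, hw2⟩ := swYA u s t h1 h2 h3 h4
            obtain ⟨k', hk'⟩ := exists_orderEmbOfFin_eq hY hiY
            subst hj1; subst hk'
            have hkk : k ≠ k' := fun h => hi1 (by rw [h])
            refine Or.inl ⟨k', fun h => hkk h.symm, ?_⟩
            rw [alphaM_ofCols, swapCols_comm _ hij]
            exact congrArg ofCols (mapAA hY u s t hkk hw2 hw1)
          · by_cases hjY : j ∈ Y
            · have hfj : acols Y Z hY u k j = ycol u := by simp [acols, hj1, hjY]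
              rw [hfj] at h3
              rw [h1] at h3
              exact absurd h3 (by simp)
            · by_cases hjZ : j ∈ Z
              · have hfj : acols Y Z hY u k j = zcol u := by simp [acols, hj1, hjY, hjZ]
                rw [hfj] at h2 h3
                exact (swYZ u s t h1 h2 h3 h4).elim
              · have hfj : acols Y Z hY u k j = fun _ => false := by
                  simp [acols, hj1, hjY, hjZ]
                rw [hfj] at h2
                simp at h2
        · by_cases hiZ : i ∈ Z
          · have hfi : acols Y Z hY u k i = zcol u := by simp [acols, hi1, hiY, hiZ]
            rw [hfi] at h1 h4
            by_cases hj1 : j = Y.orderEmbOfFin hY k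
            · have hfj : acols Y Z hY u k j = aacol u := by simp [acols, hj1]
              rw [hfj] at h2 h3
              obtain ⟨l, hl⟩ := exists_orderEmbOfFin_eq hZ hiZ
              subst hj1; subst hl
              rcases swZA u s t h1 h2 h3 h4 with ⟨hw1, hw2⟩ | ⟨hw1, hw2⟩
              · refine Or.inr (Or.inl ⟨l, ?_⟩)
                rw [betaM_ofCols, swapCols_comm _ hij]
                exact congrArg ofCols (mapAB hY hZ u s t hYZ hw1 hw2)
              · refine Or.inr (Or.inr ⟨l, ?_⟩)
                rw [gammaM_ofCols, swapCols_comm _ hij]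
                exact congrArg ofCols (mapAG hY hZ u s t hYZ hw1 hw2)
            · by_cases hjY : j ∈ Y
              · have hfj : acols Y Z hY u k j = ycol u := by simp [acols, hj1, hjY]
                rw [hfj] at h2 h3
                exact (swZY u s t h1 h2 h3 h4).elim
              · by_cases hjZ : j ∈ Z
                · have hfj : acols Y Z hY u k j = zcol u := by
                    simp [acols, hj1, hjY, hjZ]
                  rw [hfj] at h3
                  rw [h1] at h3
                  exact absurd h3 (by simp)
                · have hfj : acols Y Z hY u k j = fun _ => false := by
                    simp [acols, hj1, hjY, hjZ]
                  rw [hfj] at h2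
                  simp at h2
          · have hfi : acols Y Z hY u k i = fun _ => false := by
              simp [acols, hi1, hiY, hiZ]
            rw [hfi] at h1
            simp at h1
    · rintro (⟨k', hk'k, rfl⟩ | ⟨l, rfl⟩ | ⟨l, rfl⟩)
      · obtain ⟨s, t, hst, c1, c2, c3, c4, hw1, hw2⟩ := exAY u
        have hkk : k ≠ k' := fun h => hk'k h.symm
        have hne : Y.orderEmbOfFin hY k ≠ Y.orderEmbOfFin hY k' :=
          fun h => hkk ((Y.orderEmbOfFin hY).injective h)
        refine ⟨Y.orderEmbOfFin hY k, Y.orderEmbOfFin hY k', hne, s, t, hst, ?_, ?_, ?_, ?_, ?_⟩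
        · simpa [acols] using c1
        · simpa [acols, Ne.symm hne, Finset.orderEmbOfFin_mem] using c2
        · simpa [acols, Ne.symm hne, Finset.orderEmbOfFin_mem] using c3
        · simpa [acols] using c4
        · rw [alphaM_ofCols]
          exact (congrArg ofCols (mapAA hY u s t hkk hw1 hw2)).symm
      · obtain ⟨s, t, hst, c1, c2, c3, c4, hw1, hw2⟩ := exAZb u
        have hlZ : Z.orderEmbOfFin hZ l ∈ Z := Finset.orderEmbOfFin_mem Z hZ l
        have hlY : Z.orderEmbOfFin hZ l ∉ Y := Finset.disjoint_right.mp hYZ hlZ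
        have hne : Y.orderEmbOfFin hY k ≠ Z.orderEmbOfFin hZ l := fun h => hlY (h ▸ hkY)
        refine ⟨Y.orderEmbOfFin hY k, Z.orderEmbOfFin hZ l, hne, s, t, hst, ?_, ?_, ?_, ?_, ?_⟩
        · simpa [acols] using c1
        · simpa [acols, Ne.symm hne, hlY, hlZ] using c2
        · simpa [acols, Ne.symm hne, hlY, hlZ] using c3
        · simpa [acols] using c4
        · rw [betaM_ofCols]
          exact (congrArg ofCols (mapAB hY hZ u s t hYZ hw1 hw2)).symm
      · obtain ⟨s, t, hst, c1, c2, c3, c4, hw1, hw2⟩ := exAZg u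
        have hlZ : Z.orderEmbOfFin hZ l ∈ Z := Finset.orderEmbOfFin_mem Z hZ l
        have hlY : Z.orderEmbOfFin hZ l ∉ Y := Finset.disjoint_right.mp hYZ hlZ
        have hne : Y.orderEmbOfFin hY k ≠ Z.orderEmbOfFin hZ l := fun h => hlY (h ▸ hkY)
        refine ⟨Y.orderEmbOfFin hY k, Z.orderEmbOfFin hZ l, hne, s, t, hst, ?_, ?_, ?_, ?_, ?_⟩
        · simpa [acols] using c1
        · simpa [acols, Ne.symm hne, hlY, hlZ] using c2
        · simpa [acols, Ne.symm hne, hlY, hlZ] using c3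
        · simpa [acols] using c4
        · rw [gammaM_ofCols]
          exact (congrArg ofCols (mapAG hY hZ u s t hYZ hw1 hw2)).symm
  · -- part (ii): swaps from `β^u_l`
    intro l
    have hlZ : Z.orderEmbOfFin hZ l ∈ Z := Finset.orderEmbOfFin_mem Z hZ l
    have hlY : Z.orderEmbOfFin hZ l ∉ Y := Finset.disjoint_right.mp hYZ hlZ
    ext L
    simp only [Set.mem_setOf_eq]
    rw [betaM_ofCols, beadSwap_ofCols_iff]
    constructor
    · rintro ⟨i, j, hij, s, t, hst, h1, h2, h3, h4, rfl⟩
      by_cases hi1 : i = Z.orderEmbOfFin hZ l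
      · have hfi : bcols Y Z hZ u l i = abcol u := by simp [bcols, hi1]
        rw [hfi] at h1 h4
        by_cases hjZ : j ∈ Z
        · have hj1 : j ≠ Z.orderEmbOfFin hZ l := fun h => hij (hi1.trans h.symm)
          have hfj : bcols Y Z hZ u l j = zcol u := by simp [bcols, hj1, hjZ]
          rw [hfj] at h2 h3
          obtain ⟨hw1, hw2⟩ := swBZ u s t h1 h2 h3 h4
          obtain ⟨l', hl'⟩ := exists_orderEmbOfFin_eq hZ hjZ
          subst hi1; subst hl'
          have hll : l ≠ l' := fun h => hij (by rw [h])
          exact Or.inl ⟨l', fun h => hll h.symm, by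
            rw [betaM_ofCols]; exact congrArg ofCols (mapBB hZ u s t hll hw1 hw2)⟩
        · have hj1 : j ≠ Z.orderEmbOfFin hZ l := fun h => hjZ (h ▸ hlZ)
          by_cases hjY : j ∈ Y
          · have hfj : bcols Y Z hZ u l j = ycol u := by simp [bcols, hj1, hjZ, hjY]
            rw [hfj] at h2 h3
            obtain ⟨k, hk⟩ := exists_orderEmbOfFin_eq hY hjY
            subst hi1; subst hk
            rcases swBY u s t h1 h2 h3 h4 with ⟨hw1, hw2⟩ | ⟨hw1, hw2⟩
            · exact Or.inr (Or.inl ⟨k, by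
                rw [alphaM_ofCols]; exact congrArg ofCols (mapBA hY hZ u s t hYZ hw1 hw2)⟩)
            · exact Or.inr (Or.inr ⟨k, by
                rw [gammaM_ofCols]; exact congrArg ofCols (mapBG hY hZ u s t hYZ hw1 hw2)⟩)
          · have hfj : bcols Y Z hZ u l j = fun _ => false := by
              simp [bcols, hj1, hjZ, hjY]
            rw [hfj] at h2
            simp at h2
      · by_cases hiZ : i ∈ Z
        · have hfi : bcols Y Z hZ u l i = zcol u := by simp [bcols, hi1, hiZ]
          rw [hfi] at h1 h4
          by_cases hj1 : j = Z.orderEmbOfFin hZ l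
          · have hfj : bcols Y Z hZ u l j = abcol u := by simp [bcols, hj1]
            rw [hfj] at h2 h3
            obtain ⟨hw1, hw2⟩ := swZB u s t h1 h2 h3 h4
            obtain ⟨l', hl'⟩ := exists_orderEmbOfFin_eq hZ hiZ
            subst hj1; subst hl'
            have hll : l ≠ l' := fun h => hi1 (by rw [h])
            refine Or.inl ⟨l', fun h => hll h.symm, ?_⟩
            rw [betaM_ofCols, swapCols_comm _ hij]
            exact congrArg ofCols (mapBB hZ u s t hll hw2 hw1)
          · by_cases hjZ : j ∈ Z
            · have hfj : bcols Y Z hZ u l j = zcol u := by simp [bcols, hj1, hjZ]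
              rw [hfj] at h3
              rw [h1] at h3
              exact absurd h3 (by simp)
            · by_cases hjY : j ∈ Y
              · have hfj : bcols Y Z hZ u l j = ycol u := by simp [bcols, hj1, hjZ, hjY]
                rw [hfj] at h2 h3
                exact (swZY u s t h1 h2 h3 h4).elim
              · have hfj : bcols Y Z hZ u l j = fun _ => false := by
                  simp [bcols, hj1, hjZ, hjY]
                rw [hfj] at h2
                simp at h2
        · by_cases hiY : i ∈ Y
          · have hfi : bcols Y Z hZ u l i = ycol u := by simp [bcols, hi1, hiZ, hiY]
            rw [hfi] at h1 h4
            by_cases hj1 : j = Z.orderEmbOfFin hZ l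
            · have hfj : bcols Y Z hZ u l j = abcol u := by simp [bcols, hj1]
              rw [hfj] at h2 h3
              obtain ⟨k, hk⟩ := exists_orderEmbOfFin_eq hY hiY
              subst hj1; subst hk
              rcases swYB u s t h1 h2 h3 h4 with ⟨hw1, hw2⟩ | ⟨hw1, hw2⟩
              · refine Or.inr (Or.inl ⟨k, ?_⟩)
                rw [alphaM_ofCols, swapCols_comm _ hij]
                exact congrArg ofCols (mapBA hY hZ u s t hYZ hw1 hw2)
              · refine Or.inr (Or.inr ⟨k, ?_⟩)
                rw [gammaM_ofCols, swapCols_comm _ hij]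
                exact congrArg ofCols (mapBG hY hZ u s t hYZ hw1 hw2)
            · by_cases hjZ : j ∈ Z
              · have hfj : bcols Y Z hZ u l j = zcol u := by simp [bcols, hj1, hjZ]
                rw [hfj] at h2 h3
                exact (swYZ u s t h1 h2 h3 h4).elim
              · by_cases hjY : j ∈ Y
                · have hfj : bcols Y Z hZ u l j = ycol u := by
                    simp [bcols, hj1, hjZ, hjY]
                  rw [hfj] at h3
                  rw [h1] at h3
                  exact absurd h3 (by simp)
                · have hfj : bcols Y Z hZ u l j = fun _ => false := by
                    simp [bcols, hj1, hjZ, hjY]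
                  rw [hfj] at h2
                  simp at h2
          · have hfi : bcols Y Z hZ u l i = fun _ => false := by
              simp [bcols, hi1, hiZ, hiY]
            rw [hfi] at h1
            simp at h1
    · rintro (⟨l', hl'l, rfl⟩ | ⟨k, rfl⟩ | ⟨k, rfl⟩)
      · obtain ⟨s, t, hst, c1, c2, c3, c4, hw1, hw2⟩ := exBZ u
        have hll : l ≠ l' := fun h => hl'l h.symm
        have hne : Z.orderEmbOfFin hZ l ≠ Z.orderEmbOfFin hZ l' :=
          fun h => hll ((Z.orderEmbOfFin hZ).injective h)
        refine ⟨Z.orderEmbOfFin hZ l, Z.orderEmbOfFin hZ l', hne, s, t, hst, ?_, ?_, ?_, ?_, ?_⟩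
        · simpa [bcols] using c1
        · simpa [bcols, Ne.symm hne, Finset.orderEmbOfFin_mem] using c2
        · simpa [bcols, Ne.symm hne, Finset.orderEmbOfFin_mem] using c3
        · simpa [bcols] using c4
        · rw [betaM_ofCols]
          exact (congrArg ofCols (mapBB hZ u s t hll hw1 hw2)).symm
      · obtain ⟨s, t, hst, c1, c2, c3, c4, hw1, hw2⟩ := exBYa u
        have hkY : Y.orderEmbOfFin hY k ∈ Y := Finset.orderEmbOfFin_mem Y hY k
        have hkZ : Y.orderEmbOfFin hY k ∉ Z := Finset.disjoint_left.mp hYZ hkY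
        have hne : Z.orderEmbOfFin hZ l ≠ Y.orderEmbOfFin hY k := fun h => hkZ (h ▸ hlZ)
        refine ⟨Z.orderEmbOfFin hZ l, Y.orderEmbOfFin hY k, hne, s, t, hst, ?_, ?_, ?_, ?_, ?_⟩
        · simpa [bcols] using c1
        · simpa [bcols, Ne.symm hne, hkZ, hkY] using c2
        · simpa [bcols, Ne.symm hne, hkZ, hkY] using c3
        · simpa [bcols] using c4
        · rw [alphaM_ofCols]
          exact (congrArg ofCols (mapBA hY hZ u s t hYZ hw1 hw2)).symm
      · obtain ⟨s, t, hst, c1, c2, c3, c4, hw1, hw2⟩ := exBYg u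
        have hkY : Y.orderEmbOfFin hY k ∈ Y := Finset.orderEmbOfFin_mem Y hY k
        have hkZ : Y.orderEmbOfFin hY k ∉ Z := Finset.disjoint_left.mp hYZ hkY
        have hne : Z.orderEmbOfFin hZ l ≠ Y.orderEmbOfFin hY k := fun h => hkZ (h ▸ hlZ)
        refine ⟨Z.orderEmbOfFin hZ l, Y.orderEmbOfFin hY k, hne, s, t, hst, ?_, ?_, ?_, ?_, ?_⟩
        · simpa [bcols] using c1
        · simpa [bcols, Ne.symm hne, hkZ, hkY] using c2
        · simpa [bcols, Ne.symm hne, hkZ, hkY] using c3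
        · simpa [bcols] using c4
        · rw [gammaM_ofCols]
          exact (congrArg ofCols (mapBG hY hZ u s t hYZ hw1 hw2)).symm
  · -- part (iii): swaps from `γ^u_{kl}`
    intro k l
    have hkY : Y.orderEmbOfFin hY k ∈ Y := Finset.orderEmbOfFin_mem Y hY k
    have hlZ : Z.orderEmbOfFin hZ l ∈ Z := Finset.orderEmbOfFin_mem Z hZ l
    have hkZ : Y.orderEmbOfFin hY k ∉ Z := Finset.disjoint_left.mp hYZ hkY
    have hlY : Z.orderEmbOfFin hZ l ∉ Y := Finset.disjoint_right.mp hYZ hlZ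
    have hkl : Y.orderEmbOfFin hY k ≠ Z.orderEmbOfFin hZ l := fun h => hlY (h ▸ hkY)
    ext L
    simp only [Set.mem_setOf_eq]
    rw [gammaM_ofCols, beadSwap_ofCols_iff]
    constructor
    · rintro ⟨i, j, hij, s, t, hst, h1, h2, h3, h4, rfl⟩
      by_cases hi1 : i = Y.orderEmbOfFin hY k
      · have hfi : gcols Y Z hY hZ u k l i = oycol u := by simp [gcols, hi1]
        rw [hfi] at h1 h4
        by_cases hj2 : j = Z.orderEmbOfFin hZ l
        · have hfj : gcols Y Z hY hZ u k l j = ozcol u := by simp [gcols, hj2, Ne.symm hkl]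
          rw [hfj] at h2 h3
          subst hi1; subst hj2
          rcases swOyOz u s t h1 h2 h3 h4 with ⟨hw1, hw2⟩ | ⟨hw1, hw2⟩
          · refine Or.inr (Or.inr (Or.inl ?_))
            rw [alphaM_ofCols]
            exact congrArg ofCols (mapGA hY hZ u s t hYZ hw1 hw2)
          · refine Or.inr (Or.inr (Or.inr ?_))
            rw [betaM_ofCols]
            exact congrArg ofCols (mapGB hY hZ u s t hYZ hw1 hw2)
        · by_cases hjY : j ∈ Y
          · have hj1 : j ≠ Y.orderEmbOfFin hY k := fun h => hij (hi1.trans h.symm)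
            have hfj : gcols Y Z hY hZ u k l j = ycol u := by simp [gcols, hj1, hj2, hjY]
            rw [hfj] at h2 h3
            obtain ⟨hw1, hw2⟩ := swOyY u s t h1 h2 h3 h4
            obtain ⟨k', hk'⟩ := exists_orderEmbOfFin_eq hY hjY
            subst hi1; subst hk'
            have hkk : k ≠ k' := fun h => hij (by rw [h])
            exact Or.inl ⟨k', fun h => hkk h.symm, by
              rw [gammaM_ofCols]
              exact congrArg ofCols (mapGK hY hZ u s t hYZ hkk hw1 hw2)⟩
          · by_cases hjZ : j ∈ Z
            · have hj1 : j ≠ Y.orderEmbOfFin hY k := fun h => hjY (h ▸ hkY)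
              have hfj : gcols Y Z hY hZ u k l j = zcol u := by
                simp [gcols, hj1, hj2, hjY, hjZ]
              rw [hfj] at h2 h3
              exact (swOyZ u s t h1 h2 h3 h4).elim
            · have hj1 : j ≠ Y.orderEmbOfFin hY k := fun h => hjY (h ▸ hkY)
              have hfj : gcols Y Z hY hZ u k l j = fun _ => false := by
                simp [gcols, hj1, hj2, hjY, hjZ]
              rw [hfj] at h2
              simp at h2
      · by_cases hi2 : i = Z.orderEmbOfFin hZ l
        · have hfi : gcols Y Z hY hZ u k l i = ozcol u := by simp [gcols, hi2, Ne.symm hkl]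
          rw [hfi] at h1 h4
          by_cases hj1 : j = Y.orderEmbOfFin hY k
          · have hfj : gcols Y Z hY hZ u k l j = oycol u := by simp [gcols, hj1]
            rw [hfj] at h2 h3
            subst hi2; subst hj1
            rcases swOzOy u s t h1 h2 h3 h4 with ⟨hw1, hw2⟩ | ⟨hw1, hw2⟩
            · refine Or.inr (Or.inr (Or.inl ?_))
              rw [alphaM_ofCols, swapCols_comm _ hij]
              exact congrArg ofCols (mapGA hY hZ u s t hYZ hw1 hw2)
            · refine Or.inr (Or.inr (Or.inr ?_))
              rw [betaM_ofCols, swapCols_comm _ hij]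
              exact congrArg ofCols (mapGB hY hZ u s t hYZ hw1 hw2)
          · by_cases hjZ : j ∈ Z
            · have hj2 : j ≠ Z.orderEmbOfFin hZ l := fun h => hij (hi2.trans h.symm)
              have hjY : j ∉ Y := Finset.disjoint_right.mp hYZ hjZ
              have hfj : gcols Y Z hY hZ u k l j = zcol u := by
                simp [gcols, hj1, hj2, hjY, hjZ]
              rw [hfj] at h2 h3
              obtain ⟨hw1, hw2⟩ := swOzZ u s t h1 h2 h3 h4
              obtain ⟨l', hl'⟩ := exists_orderEmbOfFin_eq hZ hjZ
              subst hi2; subst hl'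
              have hll : l ≠ l' := fun h => hij (by rw [h])
              refine Or.inr (Or.inl ⟨l', fun h => hll h.symm, ?_⟩)
              rw [gammaM_ofCols]
              exact congrArg ofCols (mapGL hY hZ u s t hYZ hll hw1 hw2)
            · by_cases hjY : j ∈ Y
              · have hj2 : j ≠ Z.orderEmbOfFin hZ l := fun h => hjZ (h ▸ hlZ)
                have hfj : gcols Y Z hY hZ u k l j = ycol u := by
                  simp [gcols, hj1, hj2, hjY]
                rw [hfj] at h2 h3
                exact (swOzY u s t h1 h2 h3 h4).elim
              · have hj2 : j ≠ Z.orderEmbOfFin hZ l := fun h => hjZ (h ▸ hlZ)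
                have hfj : gcols Y Z hY hZ u k l j = fun _ => false := by
                  simp [gcols, hj1, hj2, hjY, hjZ]
                rw [hfj] at h2
                simp at h2
        · by_cases hiY : i ∈ Y
          · have hfi : gcols Y Z hY hZ u k l i = ycol u := by simp [gcols, hi1, hi2, hiY]
            rw [hfi] at h1 h4
            by_cases hj1 : j = Y.orderEmbOfFin hY k
            · have hfj : gcols Y Z hY hZ u k l j = oycol u := by simp [gcols, hj1]
              rw [hfj] at h2 h3
              obtain ⟨hw1, hw2⟩ := swYOy u s t h1 h2 h3 h4
              obtain ⟨k', hk'⟩ := exists_orderEmbOfFin_eq hY hiY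
              subst hj1; subst hk'
              have hkk : k ≠ k' := fun h => hi1 (by rw [h])
              refine Or.inl ⟨k', fun h => hkk h.symm, ?_⟩
              rw [gammaM_ofCols, swapCols_comm _ hij]
              exact congrArg ofCols (mapGK hY hZ u s t hYZ hkk hw1 hw2)
            · by_cases hj2 : j = Z.orderEmbOfFin hZ l
              · have hfj : gcols Y Z hY hZ u k l j = ozcol u := by
                  simp [gcols, hj2, Ne.symm hkl]
                rw [hfj] at h2 h3
                exact (swYOz u s t h1 h2 h3 h4).elim
              · by_cases hjY : j ∈ Y
                · have hfj : gcols Y Z hY hZ u k l j = ycol u := by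
                    simp [gcols, hj1, hj2, hjY]
                  rw [hfj] at h3
                  rw [h1] at h3
                  exact absurd h3 (by simp)
                · by_cases hjZ : j ∈ Z
                  · have hfj : gcols Y Z hY hZ u k l j = zcol u := by
                      simp [gcols, hj1, hj2, hjY, hjZ]
                    rw [hfj] at h2 h3
                    exact (swYZ u s t h1 h2 h3 h4).elim
                  · have hfj : gcols Y Z hY hZ u k l j = fun _ => false := by
                      simp [gcols, hj1, hj2, hjY, hjZ]
                    rw [hfj] at h2
                    simp at h2
          · by_cases hiZ : i ∈ Z
            · have hfi : gcols Y Z hY hZ u k l i = zcol u := by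
                simp [gcols, hi1, hi2, hiY, hiZ]
              rw [hfi] at h1 h4
              by_cases hj1 : j = Y.orderEmbOfFin hY k
              · have hfj : gcols Y Z hY hZ u k l j = oycol u := by simp [gcols, hj1]
                rw [hfj] at h2 h3
                exact (swZOy u s t h1 h2 h3 h4).elim
              · by_cases hj2 : j = Z.orderEmbOfFin hZ l
                · have hfj : gcols Y Z hY hZ u k l j = ozcol u := by
                    simp [gcols, hj2, Ne.symm hkl]
                  rw [hfj] at h2 h3
                  obtain ⟨hw1, hw2⟩ := swZOz u s t h1 h2 h3 h4
                  obtain ⟨l', hl'⟩ := exists_orderEmbOfFin_eq hZ hiZ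
                  subst hj2; subst hl'
                  have hll : l ≠ l' := fun h => hi2 (by rw [h])
                  refine Or.inr (Or.inl ⟨l', fun h => hll h.symm, ?_⟩)
                  rw [gammaM_ofCols, swapCols_comm _ hij]
                  exact congrArg ofCols (mapGL hY hZ u s t hYZ hll hw1 hw2)
                · by_cases hjY : j ∈ Y
                  · have hfj : gcols Y Z hY hZ u k l j = ycol u := by
                      simp [gcols, hj1, hj2, hjY]
                    rw [hfj] at h2 h3
                    exact (swZY u s t h1 h2 h3 h4).elim
                  · by_cases hjZ : j ∈ Z
                    · have hfj : gcols Y Z hY hZ u k l j = zcol u := by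
                        simp [gcols, hj1, hj2, hjY, hjZ]
                      rw [hfj] at h3
                      rw [h1] at h3
                      exact absurd h3 (by simp)
                    · have hfj : gcols Y Z hY hZ u k l j = fun _ => false := by
                        simp [gcols, hj1, hj2, hjY, hjZ]
                      rw [hfj] at h2
                      simp at h2
            · have hfi : gcols Y Z hY hZ u k l i = fun _ => false := by
                simp [gcols, hi1, hi2, hiY, hiZ]
              rw [hfi] at h1
              simp at h1
    · rintro (⟨k', hk'k, rfl⟩ | ⟨l', hl'l, rfl⟩ | rfl | rfl)
      · obtain ⟨s, t, hst, c1, c2, c3, c4, hw1, hw2⟩ := exGY u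
        have hkk : k ≠ k' := fun h => hk'k h.symm
        have hk'Y : Y.orderEmbOfFin hY k' ∈ Y := Finset.orderEmbOfFin_mem Y hY k'
        have hk'Zl : Y.orderEmbOfFin hY k' ≠ Z.orderEmbOfFin hZ l :=
          fun h => (Finset.disjoint_left.mp hYZ hk'Y) (h ▸ hlZ)
        have hne : Y.orderEmbOfFin hY k ≠ Y.orderEmbOfFin hY k' :=
          fun h => hkk ((Y.orderEmbOfFin hY).injective h)
        refine ⟨Y.orderEmbOfFin hY k, Y.orderEmbOfFin hY k', hne, s, t, hst, ?_, ?_, ?_, ?_, ?_⟩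
        · simpa [gcols] using c1
        · simpa [gcols, Ne.symm hne, hk'Zl, hk'Y] using c2
        · simpa [gcols, Ne.symm hne, hk'Zl, hk'Y] using c3
        · simpa [gcols] using c4
        · rw [gammaM_ofCols]
          exact (congrArg ofCols (mapGK hY hZ u s t hYZ hkk hw1 hw2)).symm
      · obtain ⟨s, t, hst, c1, c2, c3, c4, hw1, hw2⟩ := exGZ u
        have hll : l ≠ l' := fun h => hl'l h.symm
        have hl'Z : Z.orderEmbOfFin hZ l' ∈ Z := Finset.orderEmbOfFin_mem Z hZ l'
        have hl'Y : Z.orderEmbOfFin hZ l' ∉ Y := Finset.disjoint_right.mp hYZ hl'Z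
        have hl'k : Z.orderEmbOfFin hZ l' ≠ Y.orderEmbOfFin hY k := fun h => hl'Y (h ▸ hkY)
        have hlk : Z.orderEmbOfFin hZ l ≠ Y.orderEmbOfFin hY k := fun h => hlY (h ▸ hkY)
        have hne : Z.orderEmbOfFin hZ l ≠ Z.orderEmbOfFin hZ l' :=
          fun h => hll ((Z.orderEmbOfFin hZ).injective h)
        refine ⟨Z.orderEmbOfFin hZ l, Z.orderEmbOfFin hZ l', hne, s, t, hst, ?_, ?_, ?_, ?_, ?_⟩
        · simpa [gcols, hlk] using c1
        · simpa [gcols, hl'k, Ne.symm hne, hl'Y, hl'Z] using c2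
        · simpa [gcols, hl'k, Ne.symm hne, hl'Y, hl'Z] using c3
        · simpa [gcols, hlk] using c4
        · rw [gammaM_ofCols]
          exact (congrArg ofCols (mapGL hY hZ u s t hYZ hll hw1 hw2)).symm
      · obtain ⟨s, t, hst, c1, c2, c3, c4, hw1, hw2⟩ := exGa u
        refine ⟨Y.orderEmbOfFin hY k, Z.orderEmbOfFin hZ l, hkl, s, t, hst, ?_, ?_, ?_, ?_, ?_⟩
        · simpa [gcols] using c1
        · simpa [gcols, Ne.symm hkl] using c2
        · simpa [gcols, Ne.symm hkl] using c3
        · simpa [gcols] using c4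
        · rw [alphaM_ofCols]
          exact (congrArg ofCols (mapGA hY hZ u s t hYZ hw1 hw2)).symm
      · obtain ⟨s, t, hst, c1, c2, c3, c4, hw1, hw2⟩ := exGb u
        refine ⟨Y.orderEmbOfFin hY k, Z.orderEmbOfFin hZ l, hkl, s, t, hst, ?_, ?_, ?_, ?_, ?_⟩
        · simpa [gcols] using c1
        · simpa [gcols, Ne.symm hkl] using c2
        · simpa [gcols, Ne.symm hkl] using c3
        · simpa [gcols] using c4
        · rw [betaM_ofCols]
          exact (congrArg ofCols (mapGB hY hZ u s t hYZ hw1 hw2)).symm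


end
end AK
end
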